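/- arXiv:2502.04177 — 6 statements merged into one kernel-verified Lean document; each statement's English description precedes it below -/
import Mathlib

section
/- For every finite graph G and every integer r ≥ 0, the maximum order of a depth-r bramble of G is at most the strong (4r+1)-coloring number of G. That is, bn_r(G) ≤ scol_{4r+1}(G). -/
open SimpleGraph

variable {V : Type*}

/-- `B` induces a connected subgraph of `G`. -/
def ConnSet (G : SimpleGraph V) (B : Set V) : Prop := (G.induce B).Connected

/-- `B` induces a subgraph of `G` of radius at most `r`. -/
def RadiusLE (G : SimpleGraph V) (B : Set V) (r : ℕ) : Prop :=
  ∃ u : B, ∀ v : B, (G.induce B).dist u v ≤ r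

/-- Two vertex sets touch: they share a vertex or are joined by an edge. -/
def Touch (G : SimpleGraph V) (A B : Set V) : Prop :=
  (A ∩ B).Nonempty ∨ ∃ a ∈ A, ∃ b ∈ B, G.Adj a b

/-- A depth-`r` bramble. -/
def IsBramble (G : SimpleGraph V) (r : ℕ) (𝓑 : Finset (Set V)) : Prop :=
  (∀ B ∈ 𝓑, ConnSet G B ∧ RadiusLE G B r) ∧ ∀ B ∈ 𝓑, ∀ C ∈ 𝓑, Touch G B C

/-- A bramble with no bound on the radius of its elements. -/
def IsBrambleND (G : SimpleGraph V) (𝓑 : Finset (Set V)) : Prop :=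
  (∀ B ∈ 𝓑, ConnSet G B) ∧ ∀ B ∈ 𝓑, ∀ C ∈ 𝓑, Touch G B C

def IsHittingSet (𝓑 : Finset (Set V)) (X : Finset V) : Prop :=
  ∀ B ∈ 𝓑, ∃ x ∈ X, x ∈ B

/-- The order of a bramble: minimum size of a hitting set. -/
noncomputable def brambleOrder (𝓑 : Finset (Set V)) : ℕ :=
  sInf {n | ∃ X : Finset V, X.card = n ∧ IsHittingSet 𝓑 X}

/-- The depth-`r` bramble number. -/
noncomputable def bn (G : SimpleGraph V) (r : ℕ) : ℕ :=
  sSup {n | ∃ 𝓑 : Finset (Set V), IsBramble G r 𝓑 ∧ brambleOrder 𝓑 = n}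

/-- A depth-`r` `t`-bramble: any `t` (not necessarily distinct) elements intersect. -/
def IsTBramble (G : SimpleGraph V) (r t : ℕ) (𝓑 : Finset (Set V)) : Prop :=
  IsBramble G r 𝓑 ∧ ∀ f : Fin t → Set V, (∀ i, f i ∈ 𝓑) → (⋂ i, f i).Nonempty

/-- The depth-`r` `t`-bramble number. -/
noncomputable def bnT (G : SimpleGraph V) (r t : ℕ) : ℕ :=
  sSup {n | ∃ 𝓑 : Finset (Set V), IsTBramble G r t 𝓑 ∧ brambleOrder 𝓑 = n}

/-- A depth-`r` tangle. -/
def IsTangle (G : SimpleGraph V) (r : ℕ) (𝓑 : Finset (Set V)) : Prop :=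
  IsBramble G r 𝓑 ∧ ∀ T₁ ∈ 𝓑, ∀ T₂ ∈ 𝓑, ∀ T₃ ∈ 𝓑,
    (T₁ ∩ T₂ ∩ T₃).Nonempty ∨
      ∃ a b : V, G.Adj a b ∧ (a ∈ T₁ ∨ b ∈ T₁) ∧ (a ∈ T₂ ∨ b ∈ T₂) ∧ (a ∈ T₃ ∨ b ∈ T₃)

/-- The depth-`r` tangle number. -/
noncomputable def tn (G : SimpleGraph V) (r : ℕ) : ℕ :=
  sSup {n | ∃ 𝓑 : Finset (Set V), IsTangle G r 𝓑 ∧ brambleOrder 𝓑 = n}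

/-- The set of vertices strongly `k`-reachable from `v` w.r.t. the linear order
given by the embedding `π : V ↪ ℕ`. -/
def SReach (G : SimpleGraph V) (π : V ↪ ℕ) (k : ℕ) (v : V) : Set V :=
  {u | π u ≤ π v ∧ ∃ p : G.Walk v u, p.IsPath ∧ p.length ≤ k ∧
    ∀ w ∈ p.support, w ≠ v → w ≠ u → π v < π w}

/-- The strong `k`-coloring number. -/
noncomputable def scol (G : SimpleGraph V) (k : ℕ) : ℕ :=
  sInf {n | ∃ π : V ↪ ℕ, ∀ v : V, (SReach G π k v).ncard ≤ n}

/-- A depth-`r` minor-model of `H` in `G`. -/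
def IsMinorModel {W : Type*} (G : SimpleGraph V) (H : SimpleGraph W) (r : ℕ)
    (M : W → Set V) : Prop :=
  (∀ w, ConnSet G (M w) ∧ RadiusLE G (M w) r) ∧
  (Pairwise fun w w' => Disjoint (M w) (M w')) ∧
  ∀ ⦃w w'⦄, H.Adj w w' → ∃ a ∈ M w, ∃ b ∈ M w', G.Adj a b

/-- `ω_r(G)`: the largest `t` such that `K_t` is a depth-`r` minor of `G`. -/
noncomputable def cliqueMinorNum (G : SimpleGraph V) (r : ℕ) : ℕ :=
  sSup {t | ∃ M : Fin t → Set V, IsMinorModel G (⊤ : SimpleGraph (Fin t)) r M}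

/-- `grid_r(G)`: the largest `t` such that the `t × t` grid is a depth-`r` minor of `G`. -/
noncomputable def gridMinorNum (G : SimpleGraph V) (r : ℕ) : ℕ :=
  sSup {t | ∃ M : Fin t × Fin t → Set V,
    IsMinorModel G (SimpleGraph.pathGraph t □ SimpleGraph.pathGraph t) r M}

/-- `S` is depth-`r` `k`-linked. -/
def IsLinkedSet (G : SimpleGraph V) (r k : ℕ) (S : Set V) : Prop :=
  ∀ X : Finset V, X.card < k →
    ∃ B : Set V, (∀ x ∈ X, x ∉ B) ∧ ConnSet G B ∧ RadiusLE G B r ∧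
      S.ncard < 2 * (S ∩ B).ncard

/-- The depth-`r` linkedness of `G`. -/
noncomputable def linkNum (G : SimpleGraph V) (r : ℕ) : ℕ :=
  sSup {k | ∃ S : Set V, IsLinkedSet G r k S}

/-- `S` is depth-`r` well-linked. -/
def IsWellLinkedSet (G : SimpleGraph V) (r : ℕ) (S : Set V) : Prop :=
  ∀ A B : Finset V, ↑A ⊆ S → ↑B ⊆ S → A.card = B.card →
    ∀ Y : Finset V, Y.card < A.card →
      ∃ (a b : V) (p : G.Walk a b), a ∈ A ∧ b ∈ B ∧ p.IsPath ∧ p.length ≤ r ∧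
        ∀ w ∈ p.support, w ∉ Y

/-- The depth-`r` well-linkedness of `G`. -/
noncomputable def wellNum (G : SimpleGraph V) (r : ℕ) : ℕ :=
  sSup {n | ∃ S : Set V, IsWellLinkedSet G r S ∧ S.ncard = n}


private lemma walk_in_set {V : Type*} {G : SimpleGraph V} {B : Set V} {r : ℕ}
    (hc : ConnSet G B) (hr : RadiusLE G B r) {x y : V} (hx : x ∈ B) (hy : y ∈ B) :
    ∃ p : G.Walk x y, p.length ≤ 2 * r ∧ ∀ z ∈ p.support, z ∈ B := by
  obtain ⟨u, hu⟩ := hr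
  have h1 : (G.induce B).Reachable u ⟨x, hx⟩ := SimpleGraph.Connected.preconnected hc ..
  have h2 : (G.induce B).Reachable u ⟨y, hy⟩ := SimpleGraph.Connected.preconnected hc ..
  obtain ⟨p1, hp1⟩ := h1.exists_walk_length_eq_dist
  obtain ⟨p2, hp2⟩ := h2.exists_walk_length_eq_dist
  refine ⟨((p1.reverse.append p2).map (Embedding.induce B).toHom), ?_, ?_⟩
  · have := hu ⟨x, hx⟩
    have := hu ⟨y, hy⟩
    show ((p1.reverse.append p2).map (Embedding.induce B).toHom).length ≤ 2 * r
    simp only [SimpleGraph.Walk.length_map, SimpleGraph.Walk.length_append,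
      SimpleGraph.Walk.length_reverse, hp1, hp2]
    omega
  · intro z hz
    change z ∈ ((p1.reverse.append p2).map (Embedding.induce B).toHom).support at hz
    rw [SimpleGraph.Walk.support_map, List.mem_map] at hz
    obtain ⟨⟨z', hz'⟩, _, rfl⟩ := hz
    exact hz'

private lemma exists_first_small {V : Type*} {G : SimpleGraph V} (π : V ↪ ℕ) (v : V) :
    ∀ {a u : V} (q : G.Walk a u), π u ≤ π v →
    ∃ (w : V) (p : G.Walk a w), π w ≤ π v ∧ p.length ≤ q.length ∧
      (∀ x ∈ p.support, x ≠ a → x ≠ w → π v < π x) ∧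
      (w ∈ q.support.tail ∨ (w = a ∧ q.length = 0)) := by
  intro a u q
  induction q with
  | nil =>
    intro hu
    exact ⟨_, SimpleGraph.Walk.nil, hu, le_refl _, by simp, Or.inr ⟨rfl, rfl⟩⟩
  | @cons a b u hab q ih =>
    intro hu
    by_cases hb : π b ≤ π v
    · refine ⟨b, SimpleGraph.Walk.cons hab SimpleGraph.Walk.nil, hb, by simp, ?_, ?_⟩
      · intro x hx hxa hxb
        simp only [SimpleGraph.Walk.support_cons, SimpleGraph.Walk.support_nil,
          List.mem_cons, List.mem_singleton] at hx
        rcases hx with rfl | rfl | h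
        · exact absurd rfl hxa
        · exact absurd rfl hxb
        · exact absurd h (by simp)
      · left
        simp [SimpleGraph.Walk.support_cons, SimpleGraph.Walk.start_mem_support]
    · obtain ⟨w, p', hw, hlen, hcond, hdisj⟩ := ih hu
      refine ⟨w, SimpleGraph.Walk.cons hab p', hw, by simpa using Nat.succ_le_succ hlen, ?_, ?_⟩
      · intro x hx hxa hxw
        simp only [SimpleGraph.Walk.support_cons, List.mem_cons] at hx
        rcases hx with rfl | hx
        · exact absurd rfl hxa
        · by_cases hxb : x = b
          · subst hxb; omega
          · exact hcond x hx hxb hxw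
      · left
        simp only [SimpleGraph.Walk.support_cons, List.tail_cons]
        rcases hdisj with h | ⟨rfl, _⟩
        · exact List.mem_of_mem_tail h
        · exact SimpleGraph.Walk.start_mem_support q

/-- `bn_r(G) ≤ scol_{4r+1}(G)`. -/
theorem bn_le_scol {V : Type*} [Fintype V] (G : SimpleGraph V) (r : ℕ) :
    bn G r ≤ scol G (4 * r + 1) := by
  classical
  set k := 4 * r + 1 with hk
  have hπex : ∃ π : V ↪ ℕ, ∀ v : V, (SReach G π k v).ncard ≤ scol G k := by
    have hne : {n | ∃ π : V ↪ ℕ, ∀ v, (SReach G π k v).ncard ≤ n}.Nonempty := by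
      obtain ⟨π⟩ := nonempty_embedding_nat V
      refine ⟨Fintype.card V, π, fun v => ?_⟩
      have h := Set.ncard_le_ncard (Set.subset_univ (SReach G π k v)) Set.finite_univ
      rwa [Set.ncard_univ, Nat.card_eq_fintype_card] at h
    exact Nat.sInf_mem hne
  obtain ⟨π, hπ⟩ := hπex
  apply csSup_le'
  rintro n ⟨𝓑, h𝓑, rfl⟩
  rcases 𝓑.eq_empty_or_nonempty with rfl | hne𝓑
  · refine le_trans (Nat.sInf_le ⟨∅, rfl, fun B hB => absurd hB (by simp)⟩) ?_
    simp
  have hmins : ∀ B ∈ 𝓑, ∃ b, b ∈ B ∧ ∀ x ∈ B, π b ≤ π x := by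
    intro B hB
    have hcon := (h𝓑.1 B hB).1
    have hBne : B.Nonempty :=
      Set.nonempty_coe_sort.mp (SimpleGraph.Connected.nonempty hcon)
    obtain ⟨b, hbB, hmin⟩ := Set.exists_min_image B π (Set.toFinite B) hBne
    exact ⟨b, hbB, hmin⟩
  obtain ⟨B₁, hB₁⟩ := hne𝓑
  obtain ⟨b₁, hb₁, -⟩ := hmins B₁ hB₁
  have : Nonempty V := ⟨b₁⟩
  choose! mB hmB hmBmin using hmins
  obtain ⟨B₀, hB₀, hmax⟩ := Finset.exists_max_image 𝓑 (fun B => π (mB B)) ⟨B₁, hB₁⟩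
  set v := mB B₀ with hv
  set X := (Set.toFinite (SReach G π k v)).toFinset with hX
  have hXcard : X.card ≤ scol G k := by
    rw [hX, ← Set.ncard_eq_toFinset_card _ (Set.toFinite _)]
    exact hπ v
  have hhit : IsHittingSet 𝓑 X := by
    intro C hC
    by_cases hvC : v ∈ C
    · refine ⟨v, ?_, hvC⟩
      rw [hX, Set.Finite.mem_toFinset]
      refine ⟨le_refl _, SimpleGraph.Walk.nil, SimpleGraph.Walk.IsPath.nil, by simp, ?_⟩
      intro w hw hwv _
      simp only [SimpleGraph.Walk.support_nil, List.mem_singleton] at hw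
      exact absurd hw hwv
    · have hB₀conn := (h𝓑.1 B₀ hB₀).1
      have hB₀rad := (h𝓑.1 B₀ hB₀).2
      have hCconn := (h𝓑.1 C hC).1
      have hCrad := (h𝓑.1 C hC).2
      have htouch := h𝓑.2 B₀ hB₀ C hC
      obtain ⟨W, hWlen, hWsup⟩ : ∃ W : G.Walk v (mB C), W.length ≤ k ∧
          ∀ z ∈ W.support, z ∈ B₀ ∪ C := by
        rcases htouch with ⟨x, hxB, hxC⟩ | ⟨a, haB, b, hbC, hab⟩
        · obtain ⟨W1, hW1len, hW1sup⟩ := walk_in_set hB₀conn hB₀rad (hmB B₀ hB₀) hxB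
          obtain ⟨W2, hW2len, hW2sup⟩ := walk_in_set hCconn hCrad hxC (hmB C hC)
          refine ⟨W1.append W2, ?_, ?_⟩
          · rw [SimpleGraph.Walk.length_append]; omega
          · intro z hz
            rw [SimpleGraph.Walk.mem_support_append_iff] at hz
            rcases hz with hz | hz
            · exact Or.inl (hW1sup z hz)
            · exact Or.inr (hW2sup z hz)
        · obtain ⟨W1, hW1len, hW1sup⟩ := walk_in_set hB₀conn hB₀rad (hmB B₀ hB₀) haB
          obtain ⟨W2, hW2len, hW2sup⟩ := walk_in_set hCconn hCrad hbC (hmB C hC)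
          refine ⟨W1.append (SimpleGraph.Walk.cons hab W2), ?_, ?_⟩
          · rw [SimpleGraph.Walk.length_append, SimpleGraph.Walk.length_cons]; omega
          · intro z hz
            rw [SimpleGraph.Walk.mem_support_append_iff] at hz
            rcases hz with hz | hz
            · exact Or.inl (hW1sup z hz)
            · rw [SimpleGraph.Walk.support_cons, List.mem_cons] at hz
              rcases hz with rfl | hz
              · exact Or.inl haB
              · exact Or.inr (hW2sup z hz)
      set P := W.bypass with hPdef
      have hPpath : P.IsPath := SimpleGraph.Walk.bypass_isPath W
      have hPlen : P.length ≤ k := le_trans (SimpleGraph.Walk.length_bypass_le W) hWlen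
      have hPsup : ∀ z ∈ P.support, z ∈ B₀ ∪ C := fun z hz =>
        hWsup z (SimpleGraph.Walk.support_bypass_subset W hz)
      have hmCle : π (mB C) ≤ π v := hmax C hC
      obtain ⟨w, p, hw, hplen, hpcond, hdisj⟩ := exists_first_small π v P hmCle
      rcases hdisj with hwt | ⟨rfl, hlen0⟩
      · have hwv : w ≠ v := by
          intro h
          have hnd := hPpath.support_nodup
          rw [SimpleGraph.Walk.support_eq_cons P] at hnd
          exact (List.nodup_cons.mp hnd).1 (h ▸ hwt)
        have hwBC : w ∈ B₀ ∪ C := hPsup w (List.mem_of_mem_tail hwt)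
        have hwC : w ∈ C := by
          rcases hwBC with hwB | hwC
          · exact absurd (π.injective (le_antisymm hw (hmBmin B₀ hB₀ w hwB))) hwv
          · exact hwC
        refine ⟨w, ?_, hwC⟩
        rw [hX, Set.Finite.mem_toFinset]
        refine ⟨hw, p.bypass, SimpleGraph.Walk.bypass_isPath p,
          le_trans (SimpleGraph.Walk.length_bypass_le p) (le_trans hplen hPlen), ?_⟩
        intro x hx hxv hxw
        exact hpcond x (SimpleGraph.Walk.support_bypass_subset p hx) hxv hxw
      · exact absurd ((SimpleGraph.Walk.eq_of_length_eq_zero hlen0) ▸ hmB C hC) hvC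
  exact le_trans (Nat.sInf_le ⟨X, rfl, hhit⟩) hXcard
end

section
/- For every finite graph G and integer r ≥ 0, the depth-r linkedness of G is at most the depth-r bramble number of G: link_r(G) ≤ bn_r(G). -/
open SimpleGraph

variable {V : Type*}

/-- `link_r(G) ≤ bn_r(G)`. -/
theorem linkNum_le_bn {V : Type*} [Fintype V] (G : SimpleGraph V) (r : ℕ) :
    linkNum G r ≤ bn G r := by
  classical
  have hbdd : BddAbove {n | ∃ 𝓑 : Finset (Set V), IsBramble G r 𝓑 ∧ brambleOrder 𝓑 = n} := by
    refine ⟨Fintype.card V, ?_⟩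
    rintro n ⟨𝓑, h𝓑, rfl⟩
    apply Nat.sInf_le
    refine ⟨Finset.univ, Finset.card_univ, fun B hB => ?_⟩
    obtain ⟨x, hx⟩ := Set.nonempty_coe_sort.1 ((h𝓑.1 B hB).1.nonempty)
    exact ⟨x, Finset.mem_univ x, hx⟩
  refine csSup_le ⟨0, ∅, fun X hX => absurd hX (by simp)⟩ ?_
  rintro k ⟨S, hS⟩
  set 𝓑 : Finset (Set V) := Finset.univ.filter
    (fun B => ConnSet G B ∧ RadiusLE G B r ∧ S.ncard < 2 * (S ∩ B).ncard) with h𝓑def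
  have hmem : ∀ B, B ∈ 𝓑 ↔ ConnSet G B ∧ RadiusLE G B r ∧ S.ncard < 2 * (S ∩ B).ncard := by
    intro B; simp [h𝓑def]
  have hSfin : S.Finite := Set.toFinite S
  have hBr : IsBramble G r 𝓑 := by
    constructor
    · intro B hB; exact ⟨((hmem B).1 hB).1, ((hmem B).1 hB).2.1⟩
    · intro B hB C hC
      left
      have hB' := ((hmem B).1 hB).2.2; have hC' := ((hmem C).1 hC).2.2
      have haB : (S ∩ B).ncard ≤ S.ncard := Set.ncard_le_ncard Set.inter_subset_left hSfin
      have haC : (S ∩ C).ncard ≤ S.ncard := Set.ncard_le_ncard Set.inter_subset_left hSfin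
      have hsum := Set.ncard_union_add_ncard_inter (S ∩ B) (S ∩ C)
        (hSfin.subset Set.inter_subset_left) (hSfin.subset Set.inter_subset_left)
      have hun : ((S ∩ B) ∪ (S ∩ C)).ncard ≤ S.ncard :=
        Set.ncard_le_ncard (Set.union_subset Set.inter_subset_left Set.inter_subset_left) hSfin
      have hpos : 0 < ((S ∩ B) ∩ (S ∩ C)).ncard := by omega
      obtain ⟨x, hx⟩ := (Set.ncard_pos (Set.toFinite _)).1 hpos
      exact ⟨x, hx.1.2, hx.2.2⟩
  have horder : k ≤ brambleOrder 𝓑 := by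
    apply le_csInf
    · refine ⟨Fintype.card V, Finset.univ, Finset.card_univ, fun B hB => ?_⟩
      have hB' := ((hmem B).1 hB).2.2
      have : 0 < (S ∩ B).ncard := by omega
      obtain ⟨x, hx⟩ := (Set.ncard_pos (Set.toFinite _)).1 this
      exact ⟨x, Finset.mem_univ x, hx.2⟩
    · rintro n ⟨X, hXcard, hXhit⟩
      by_contra h
      push_neg at h
      obtain ⟨B, hBX, hConn, hRad, hMaj⟩ := hS X (hXcard ▸ h)
      obtain ⟨x, hxX, hxB⟩ := hXhit B ((hmem B).2 ⟨hConn, hRad, hMaj⟩)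
      exact hBX x hxX hxB
  exact horder.trans (le_csSup hbdd ⟨𝓑, hBr, rfl⟩)
end

section
/- For every finite graph G and integer r ≥ 0, bn_r(G) ≤ 2 · link_{3r+1}(G); in fact, any minimum-size hitting set S of a depth-r bramble of G is depth-(3r+1) ⌈|S|/2⌉-linked. -/
open SimpleGraph

variable {V : Type*}

lemma walk_map_subset {G : SimpleGraph V} {A B : Set V} (h : A ⊆ B) {u v : ↥A}
    (p : (G.induce A).Walk u v) :
    ∃ q : (G.induce B).Walk ⟨u.1, h u.2⟩ ⟨v.1, h v.2⟩, q.length = p.length :=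
  ⟨p.map (induceHom Hom.id h), p.length_map _⟩

lemma exists_walk_center {G : SimpleGraph V} {A : Set V} {r : ℕ} (hc : ConnSet G A)
    {u : ↥A} (hu : ∀ v : ↥A, (G.induce A).dist u v ≤ r) (v : ↥A) :
    ∃ p : (G.induce A).Walk u v, p.length ≤ r := by
  obtain ⟨p, hp⟩ := (hc.preconnected u v).exists_walk_length_eq_dist
  exact ⟨p, hp ▸ hu v⟩

lemma union_conn_radius {G : SimpleGraph V} {r : ℕ} {𝓕 : Finset (Set V)} {B₀ : Set V}
    (hB₀ : B₀ ∈ 𝓕)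
    (hconn : ∀ B ∈ 𝓕, ConnSet G B ∧ RadiusLE G B r)
    (htouch : ∀ B ∈ 𝓕, Touch G B₀ B) :
    ConnSet G (⋃₀ ↑𝓕) ∧ RadiusLE G (⋃₀ ↑𝓕) (3 * r + 1) := by
  obtain ⟨u₀, hu₀⟩ := (hconn B₀ hB₀).2
  set U : Set V := ⋃₀ ↑𝓕 with hU
  have hsub : ∀ B ∈ 𝓕, B ⊆ U := fun B hB =>
    Set.subset_sUnion_of_mem (by exact_mod_cast hB)
  have hu₀U : (u₀ : V) ∈ U := hsub B₀ hB₀ u₀.2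
  have key : ∀ v : ↥U, ∃ q : (G.induce U).Walk ⟨u₀.1, hu₀U⟩ v, q.length ≤ 3 * r + 1 := by
    rintro ⟨v, hv⟩
    obtain ⟨B', hB'mem, hvB'⟩ := hv
    have hB' : B' ∈ 𝓕 := by exact_mod_cast hB'mem
    obtain ⟨w', hw'⟩ := (hconn B' hB').2
    rcases htouch B' hB' with ⟨c, hcB₀, hcB'⟩ | ⟨a, haB₀, b, hbB', hab⟩
    · obtain ⟨p₁, hp₁⟩ := exists_walk_center (hconn B₀ hB₀).1 hu₀ ⟨c, hcB₀⟩
      obtain ⟨p₂, hp₂⟩ := exists_walk_center (hconn B' hB').1 hw' ⟨c, hcB'⟩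
      obtain ⟨p₃, hp₃⟩ := exists_walk_center (hconn B' hB').1 hw' ⟨v, hvB'⟩
      obtain ⟨q₁, hq₁⟩ := walk_map_subset (hsub B₀ hB₀) p₁
      obtain ⟨q₂, hq₂⟩ := walk_map_subset (hsub B' hB') p₂
      obtain ⟨q₃, hq₃⟩ := walk_map_subset (hsub B' hB') p₃
      refine ⟨q₁.append (q₂.reverse.append q₃), ?_⟩
      simp only [Walk.length_append, Walk.length_reverse]
      omega
    · obtain ⟨p₁, hp₁⟩ := exists_walk_center (hconn B₀ hB₀).1 hu₀ ⟨a, haB₀⟩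
      obtain ⟨p₂, hp₂⟩ := exists_walk_center (hconn B' hB').1 hw' ⟨b, hbB'⟩
      obtain ⟨p₃, hp₃⟩ := exists_walk_center (hconn B' hB').1 hw' ⟨v, hvB'⟩
      obtain ⟨q₁, hq₁⟩ := walk_map_subset (hsub B₀ hB₀) p₁
      obtain ⟨q₂, hq₂⟩ := walk_map_subset (hsub B' hB') p₂
      obtain ⟨q₃, hq₃⟩ := walk_map_subset (hsub B' hB') p₃
      have e : (G.induce U).Adj ⟨a, hsub B₀ hB₀ haB₀⟩ ⟨b, hsub B' hB' hbB'⟩ := hab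
      refine ⟨q₁.append ((Walk.cons e Walk.nil).append (q₂.reverse.append q₃)), ?_⟩
      simp only [Walk.length_append, Walk.length_reverse, Walk.length_cons, Walk.length_nil]
      omega
  have hrad : RadiusLE G U (3 * r + 1) := ⟨⟨u₀.1, hu₀U⟩, fun v => by
    obtain ⟨q, hq⟩ := key v
    exact le_trans (SimpleGraph.dist_le q) hq⟩
  have hconnU : ConnSet G U := by
    rw [ConnSet, connected_iff]
    refine ⟨fun x y => ?_, ⟨⟨u₀.1, hu₀U⟩⟩⟩
    obtain ⟨qx, _⟩ := key x
    obtain ⟨qy, _⟩ := key y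
    exact qx.reachable.symm.trans qy.reachable
  exact ⟨hconnU, hrad⟩

lemma linked_main {V : Type*} [Fintype V] (G : SimpleGraph V) (r : ℕ)
    (𝓑 : Finset (Set V)) (X : Finset V) (hbr : IsBramble G r 𝓑) (hhit : IsHittingSet 𝓑 X)
    (hmin : X.card = brambleOrder 𝓑) :
    IsLinkedSet G (3 * r + 1) ((X.card + 1) / 2) (↑X : Set V) := by
  classical
  intro Z hZ
  have hZk : 2 * Z.card < X.card := by omega
  -- Z is not a hitting set
  have hZnot : ¬ IsHittingSet 𝓑 Z := by
    intro h
    have : brambleOrder 𝓑 ≤ Z.card := Nat.sInf_le ⟨Z, rfl, h⟩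
    omega
  rw [IsHittingSet] at hZnot
  push_neg at hZnot
  obtain ⟨B₀, hB₀𝓑, hB₀Z⟩ := hZnot
  set 𝓕 : Finset (Set V) := 𝓑.filter (fun B => ∀ x ∈ Z, x ∉ B) with h𝓕
  have hB₀𝓕 : B₀ ∈ 𝓕 := Finset.mem_filter.mpr ⟨hB₀𝓑, hB₀Z⟩
  have h𝓕𝓑 : ∀ B ∈ 𝓕, B ∈ 𝓑 := fun B hB => (Finset.mem_filter.mp hB).1
  obtain ⟨hconnU, hradU⟩ := union_conn_radius hB₀𝓕
    (fun B hB => hbr.1 B (h𝓕𝓑 B hB))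
    (fun B hB => hbr.2 B₀ hB₀𝓑 B (h𝓕𝓑 B hB))
  set U : Set V := ⋃₀ ↑𝓕 with hU
  refine ⟨U, ?_, hconnU, hradU, ?_⟩
  · intro x hxZ hxU
    obtain ⟨B', hB'mem, hxB'⟩ := hxU
    have hB' : B' ∈ 𝓕 := by exact_mod_cast hB'mem
    exact (Finset.mem_filter.mp hB').2 x hxZ hxB'
  · -- counting
    set Y : Finset V := X.filter (· ∈ U) with hY
    have hhit2 : IsHittingSet 𝓑 (Y ∪ Z) := by
      intro B hB
      by_cases hzb : ∀ x ∈ Z, x ∉ B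
      · have hBU : B ⊆ U := Set.subset_sUnion_of_mem
          (by exact_mod_cast Finset.mem_filter.mpr ⟨hB, hzb⟩)
        obtain ⟨x, hxX, hxB⟩ := hhit B hB
        exact ⟨x, Finset.mem_union_left _ (Finset.mem_filter.mpr ⟨hxX, hBU hxB⟩), hxB⟩
      · push_neg at hzb
        obtain ⟨x, hxZ, hxB⟩ := hzb
        exact ⟨x, Finset.mem_union_right _ hxZ, hxB⟩
    have hle : brambleOrder 𝓑 ≤ (Y ∪ Z).card := Nat.sInf_le ⟨Y ∪ Z, rfl, hhit2⟩
    have hcardle : (Y ∪ Z).card ≤ Y.card + Z.card := Finset.card_union_le _ _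
    have hXU : (↑X : Set V) ∩ U = ↑Y := by
      ext x
      simp [hY, Set.mem_inter_iff, and_comm]
    rw [Set.ncard_coe_finset, hXU, Set.ncard_coe_finset]
    omega

/-- `bn_r(G) ≤ 2 · link_{3r+1}(G)`; in fact, any minimum-size hitting set `X`
of a depth-`r` bramble is depth-`(3r+1)` `⌈|X|/2⌉`-linked. -/
theorem bn_le_two_mul_linkNum {V : Type*} [Fintype V] (G : SimpleGraph V) (r : ℕ) :
    bn G r ≤ 2 * linkNum G (3 * r + 1) ∧
    ∀ (𝓑 : Finset (Set V)) (X : Finset V), IsBramble G r 𝓑 → IsHittingSet 𝓑 X →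
      X.card = brambleOrder 𝓑 → IsLinkedSet G (3 * r + 1) ((X.card + 1) / 2) (↑X : Set V) := by
  classical
  refine ⟨?_, fun 𝓑 X hbr hhit hmin => linked_main G r 𝓑 X hbr hhit hmin⟩
  have hbdd : BddAbove {k | ∃ S : Set V, IsLinkedSet G (3 * r + 1) k S} := by
    refine ⟨Fintype.card V, fun k hk => ?_⟩
    obtain ⟨S, hS⟩ := hk
    by_contra hk'
    push_neg at hk'
    have : (Finset.univ : Finset V).card < k := by
      simpa using hk'
    obtain ⟨B, hBav, hBconn, -, -⟩ := hS Finset.univ this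
    obtain ⟨⟨b, hb⟩⟩ := hBconn.nonempty
    exact hBav b (Finset.mem_univ b) hb
  rw [bn]
  by_cases hne : {n | ∃ 𝓑 : Finset (Set V), IsBramble G r 𝓑 ∧ brambleOrder 𝓑 = n}.Nonempty
  · apply csSup_le hne
    rintro n ⟨𝓑, hbr, hord⟩
    -- obtain a minimum hitting set
    have hSetNe : {m | ∃ X : Finset V, X.card = m ∧ IsHittingSet 𝓑 X}.Nonempty := by
      refine ⟨(Finset.univ : Finset V).card, Finset.univ, rfl, fun B hB => ?_⟩
      obtain ⟨⟨b, hb⟩⟩ := (hbr.1 B hB).1.nonempty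
      exact ⟨b, Finset.mem_univ b, hb⟩
    obtain ⟨X, hXcard, hXhit⟩ := Nat.sInf_mem hSetNe
    have hXmin : X.card = brambleOrder 𝓑 := hXcard
    have hlinked := linked_main G r 𝓑 X hbr hXhit hXmin
    have hmem : (X.card + 1) / 2 ∈ {k | ∃ S : Set V, IsLinkedSet G (3 * r + 1) k S} :=
      ⟨↑X, hlinked⟩
    have h1 : (X.card + 1) / 2 ≤ linkNum G (3 * r + 1) := le_csSup hbdd hmem
    have h2 : n = X.card := by rw [hXmin, hord]
    omega
  · rw [Set.not_nonempty_iff_eq_empty] at hne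
    rw [hne, csSup_empty]
    exact Nat.zero_le _
end

section
/- For every finite graph G and integer r ≥ 0, well_r(G) ≤ 4 · (1 + link_{3r}(G))²; in fact, every depth-r well-linked set S is depth-3r ⌊√|S|/2⌋-linked. -/
open SimpleGraph

variable {V : Type*}

namespace WLAux

def Reach (G : SimpleGraph V) (X : Finset V) (L : ℕ) (a v : V) : Prop :=
  ∃ p : G.Walk a v, p.length ≤ L ∧ ∀ w ∈ p.support, w ∉ X

variable {G : SimpleGraph V} {X : Finset V} {L L₁ L₂ : ℕ} {a b c : V}

lemma Reach.rfl (ha : a ∉ X) : Reach G X L a a :=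
  ⟨Walk.nil, by simp, by simpa using ha⟩

lemma Reach.symm (h : Reach G X L a b) : Reach G X L b a := by
  obtain ⟨p, h1, h2⟩ := h
  exact ⟨p.reverse, by simpa, by simpa using h2⟩

lemma Reach.trans (h : Reach G X L₁ a b) (h' : Reach G X L₂ b c) :
    Reach G X (L₁ + L₂) a c := by
  obtain ⟨p, h1, h2⟩ := h; obtain ⟨q, h1', h2'⟩ := h'
  refine ⟨p.append q, by simp; omega, fun w hw => ?_⟩
  rw [Walk.mem_support_append_iff] at hw
  exact hw.elim (h2 w) (h2' w)

lemma Reach.mono (h : L₁ ≤ L₂) (hr : Reach G X L₁ a b) : Reach G X L₂ a b := by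
  obtain ⟨p, h1, h2⟩ := hr; exact ⟨p, h1.trans h, h2⟩

lemma Reach.not_mem_right (h : Reach G X L a b) : b ∉ X := by
  obtain ⟨p, _, h2⟩ := h; exact h2 b p.end_mem_support

/-- members of the support of a reach-witness are reachable too -/
lemma reach_of_mem_support [DecidableEq V] {p : G.Walk a b} (h1 : p.length ≤ L)
    (h2 : ∀ u ∈ p.support, u ∉ X) {w : V} (hw : w ∈ p.support) : Reach G X L a w := by
  refine ⟨p.takeUntil w hw, (p.length_takeUntil_le hw).trans h1, fun u hu => ?_⟩
  exact h2 u (p.support_takeUntil_subset hw hu)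

lemma exists_induce_walk {B : Set V} :
    ∀ {u v : V} (p : G.Walk u v) (hu : u ∈ B) (hv : v ∈ B),
      (∀ w ∈ p.support, w ∈ B) →
      ∃ q : (G.induce B).Walk ⟨u, hu⟩ ⟨v, hv⟩, q.length = p.length := by
  intro u v p
  induction p with
  | nil => intro hu hv _; exact ⟨Walk.nil, rfl⟩
  | @cons u w v h p ih =>
      intro hu hv hsup
      have hw : w ∈ B := hsup w (by simp)
      obtain ⟨q, hq⟩ := ih hw hv (fun x hx => hsup x (by simp [hx]))
      exact ⟨Walk.cons (by exact h) q, by exact congrArg (· + 1) hq⟩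

/-- The ball of radius L around a (avoiding X) is connected, has radius ≤ L,
and avoids X. -/
lemma ball_props [DecidableEq V] (G : SimpleGraph V) (X : Finset V) (L : ℕ) (a : V) (ha : a ∉ X) :
    (∀ x ∈ X, x ∉ {v | Reach G X L a v}) ∧ ConnSet G {v | Reach G X L a v} ∧
      RadiusLE G {v | Reach G X L a v} L := by
  set B : Set V := {v | Reach G X L a v} with hB
  have haB : a ∈ B := Reach.rfl ha
  have key : ∀ v (hv : v ∈ B), ∃ q : (G.induce B).Walk ⟨a, haB⟩ ⟨v, hv⟩, q.length ≤ L := by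
    intro v hv
    obtain ⟨p, h1, h2⟩ := id hv
    obtain ⟨q, hq⟩ := exists_induce_walk p haB hv
      (fun w hw => reach_of_mem_support h1 h2 hw)
    exact ⟨q, by omega⟩
  refine ⟨fun x hx hxB => hxB.not_mem_right hx, ?_, ?_⟩
  · rw [ConnSet, connected_iff]
    refine ⟨fun u v => ?_, ⟨⟨a, haB⟩⟩⟩
    obtain ⟨q1, _⟩ := key u u.2
    obtain ⟨q2, _⟩ := key v v.2
    exact ⟨(q1.reverse.append q2).copy (by simp) (by simp)⟩
  · refine ⟨⟨a, haB⟩, fun v => ?_⟩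
    obtain ⟨q, hq⟩ := key v v.2
    exact (SimpleGraph.dist_le q).trans hq



lemma wl_linked [Fintype V] (G : SimpleGraph V) (r : ℕ) (S : Set V)
    (hS : IsWellLinkedSet G r S) : IsLinkedSet G (3 * r) (Nat.sqrt S.ncard / 2) S := by
  classical
  intro X hX
  set n := S.ncard with hn
  set s := Nat.sqrt n with hs
  set x := X.card with hxdef
  have hx : 2 * x + 2 ≤ s := by omega
  have hsn : s * s ≤ n := by have := Nat.sqrt_le' n; nlinarith
  have h4 : (2 * x + 2) * (2 * x + 2) ≤ n := le_trans (Nat.mul_le_mul hx hx) hsn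
  have h4' : 4 * x + 4 ≤ n := by nlinarith
  set Sf := S.toFinset with hSfdef
  have hcard : Sf.card = n := (Set.ncard_eq_toFinset_card' S).symm
  have hsubS : ∀ {A : Finset V}, A ⊆ Sf → ↑A ⊆ S := by
    intro A hA v hv
    exact Set.mem_toFinset.mp (hA hv)
  -- maximal 2r-scattered set T
  set P : Finset V → Prop := fun T => ∀ t1 ∈ T, ∀ t2 ∈ T, t1 ≠ t2 →
    ¬ Reach G X (2 * r) t1 t2 with hP
  obtain ⟨T, hTmem, hTmax⟩ := ((Sf \ X).powerset.filter P).exists_max_image Finset.card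
    ⟨∅, by simp [P]⟩
  rw [Finset.mem_filter, Finset.mem_powerset] at hTmem
  obtain ⟨hTsub, hTP⟩ := hTmem
  have hTS : T ⊆ Sf := hTsub.trans (Finset.sdiff_subset)
  -- T is small
  have hT2 : T.card ≤ 2 * x + 1 := by
    by_contra hc
    push_neg at hc
    obtain ⟨A, hA, hAcard⟩ := Finset.exists_subset_card_eq
      (show x + 1 ≤ T.card by omega)
    obtain ⟨B, hB, hBcard⟩ := Finset.exists_subset_card_eq
      (show x + 1 ≤ (T \ A).card by rw [Finset.card_sdiff_of_subset hA]; omega)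
    obtain ⟨a, b, p, ha, hb, _, hlen, hY⟩ := hS A B (hsubS (hA.trans hTS))
      (hsubS ((hB.trans (Finset.sdiff_subset)).trans hTS)) (by omega) X (by omega)
    have hbT := hB hb
    rw [Finset.mem_sdiff] at hbT
    exact hTP a (hA ha) b hbT.1 (fun h => hbT.2 (h ▸ ha))
      ⟨p, hlen.trans (by omega), hY⟩
  -- T covers Sf \ X within distance 2r
  have hcov : ∀ v ∈ Sf \ X, ∃ t ∈ T, Reach G X (2 * r) t v := by
    intro v hv
    by_contra hc
    push_neg at hc
    have hvX : v ∉ X := (Finset.mem_sdiff.mp hv).2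
    have hvT : v ∉ T := fun hvT => hc v hvT (Reach.rfl hvX)
    have hPins : P (insert v T) := by
      intro t1 h1 t2 h2 hne hr
      rcases Finset.mem_insert.mp h1 with h1v | h1T
      · rcases Finset.mem_insert.mp h2 with h2v | h2T
        · exact hne (h1v.trans h2v.symm)
        · exact hc t2 h2T (by rw [h1v] at hr; exact hr.symm)
      · rcases Finset.mem_insert.mp h2 with h2v | h2T
        · exact hc t1 h1T (by rw [h2v] at hr; exact hr)
        · exact hTP t1 h1T t2 h2T hne hr
    have hmem : insert v T ∈ (Sf \ X).powerset.filter P :=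
      Finset.mem_filter.mpr ⟨Finset.mem_powerset.mpr (Finset.insert_subset hv hTsub), hPins⟩
    have := hTmax _ hmem
    rw [Finset.card_insert_of_notMem hvT] at this
    omega
  -- pigeonhole: some center covers many vertices of S
  obtain ⟨a0, ha0T, ha0⟩ : ∃ t ∈ T,
      x + 1 ≤ (Sf.filter (fun v => Reach G X (2 * r) t v)).card := by
    by_contra hc
    push_neg at hc
    have hsub : Sf \ X ⊆ T.biUnion (fun t => Sf.filter (fun v => Reach G X (2 * r) t v)) := by
      intro v hv
      obtain ⟨t, ht, hr⟩ := hcov v hv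
      exact Finset.mem_biUnion.mpr ⟨t, ht,
        Finset.mem_filter.mpr ⟨(Finset.mem_sdiff.mp hv).1, hr⟩⟩
    have h1 : (Sf \ X).card ≤ ∑ t ∈ T, (Sf.filter (fun v => Reach G X (2 * r) t v)).card :=
      (Finset.card_le_card hsub).trans Finset.card_biUnion_le
    have h2 : ∑ t ∈ T, (Sf.filter (fun v => Reach G X (2 * r) t v)).card ≤ T.card * x := by
      have := Finset.sum_le_card_nsmul T _ x (fun t ht => Nat.lt_succ_iff.mp (hc t ht))
      simpa using this
    have h3 : n - x ≤ (Sf \ X).card := hcard ▸ Finset.le_card_sdiff X Sf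
    have h5 : T.card * x ≤ (2 * x + 1) * x := Nat.mul_le_mul_right x hT2
    have h6 : n ≤ (2 * x + 1) * x + x := by omega
    nlinarith
  have ha0X : a0 ∉ X := (Finset.mem_sdiff.mp (hTsub ha0T)).2
  obtain ⟨hav, hconn, hrad⟩ := ball_props G X (3 * r) a0 ha0X
  refine ⟨{v | Reach G X (3 * r) a0 v}, hav, hconn, hrad, ?_⟩
  set Bs : Set V := {v | Reach G X (3 * r) a0 v} with hBs
  by_contra hlt
  push_neg at hlt
  have hb : (Sf.filter (fun v => v ∈ Bs)).card = (S ∩ Bs).ncard := by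
    rw [Set.ncard_eq_toFinset_card']
    congr 1
    ext v
    simp [Sf]
  set Ff := Sf.filter (fun v => v ∉ X ∧ v ∉ Bs) with hFf
  have hFfcard : x + 1 ≤ Ff.card := by
    have hsplit := Finset.card_filter_add_card_filter_not
      (s := Sf) (p := fun v => v ∈ X ∨ v ∈ Bs)
    have hne : Sf.filter (fun v => ¬(v ∈ X ∨ v ∈ Bs)) = Ff := by
      simp [hFf, not_or]
    have hcP : (Sf.filter (fun v => v ∈ X ∨ v ∈ Bs)).card ≤ x + (S ∩ Bs).ncard := by
      have hsubu : Sf.filter (fun v => v ∈ X ∨ v ∈ Bs) ⊆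
          (Sf.filter (fun v => v ∈ X)) ∪ (Sf.filter (fun v => v ∈ Bs)) := by
        intro v hv
        rw [Finset.mem_union, Finset.mem_filter, Finset.mem_filter]
        rcases Finset.mem_filter.mp hv with ⟨h1, h2 | h2⟩
        · exact Or.inl ⟨h1, h2⟩
        · exact Or.inr ⟨h1, h2⟩
      have h1 : (Sf.filter (fun v => v ∈ X)).card ≤ x :=
        Finset.card_le_card (fun v hv => (Finset.mem_filter.mp hv).2)
      have h2 := (Finset.card_le_card hsubu).trans (Finset.card_union_le _ _)
      omega
    rw [hne] at hsplit
    omega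
  set Df := Sf.filter (fun v => Reach G X (2 * r) a0 v) with hDf
  obtain ⟨A, hA, hAcard⟩ := Finset.exists_subset_card_eq ha0
  obtain ⟨B, hB, hBcard⟩ := Finset.exists_subset_card_eq hFfcard
  obtain ⟨d, f, p, hd, hf, _, hlen, hY⟩ := hS A B (hsubS (hA.trans (Finset.filter_subset _ _)))
    (hsubS (hB.trans (Finset.filter_subset _ _))) (by omega) X (by omega)
  have hdR : Reach G X (2 * r) a0 d := (Finset.mem_filter.mp (hA hd)).2
  have hfR : Reach G X r d f := ⟨p, hlen, hY⟩
  have : Reach G X (3 * r) a0 f := by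
    have := hdR.trans hfR
    have h3r : 2 * r + r = 3 * r := by ring
    rwa [h3r] at this
  exact (Finset.mem_filter.mp (hB hf)).2.2 this

end WLAux

/-- `well_r(G) ≤ 4 · (1 + link_{3r}(G))²`; in fact, every depth-`r` well-linked
set `S` is depth-`3r` `⌊√|S|/2⌋`-linked. -/
theorem wellNum_le_sq_linkNum {V : Type*} [Fintype V] (G : SimpleGraph V) (r : ℕ) :
    wellNum G r ≤ 4 * (1 + linkNum G (3 * r)) ^ 2 ∧
    ∀ S : Set V, IsWellLinkedSet G r S →
      IsLinkedSet G (3 * r) (Nat.sqrt S.ncard / 2) S := by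
  classical
  have part2 : ∀ S : Set V, IsWellLinkedSet G r S →
      IsLinkedSet G (3 * r) (Nat.sqrt S.ncard / 2) S := fun S h => WLAux.wl_linked G r S h
  refine ⟨?_, part2⟩
  have hWne : (0 : ℕ) ∈ {n | ∃ S : Set V, IsWellLinkedSet G r S ∧ S.ncard = n} := by
    refine ⟨∅, ?_, Set.ncard_empty _⟩
    intro A B hA hB hc Y hY
    have hA0 : A = ∅ := by simpa using hA
    simp [hA0] at hY
  have hWbdd : BddAbove {n | ∃ S : Set V, IsWellLinkedSet G r S ∧ S.ncard = n} := by
    refine ⟨Fintype.card V, fun k hk => ?_⟩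
    obtain ⟨S, _, hSc⟩ := hk
    rw [← hSc]
    calc S.ncard ≤ (Set.univ : Set V).ncard :=
          Set.ncard_le_ncard (Set.subset_univ S) Set.finite_univ
      _ = Fintype.card V := by rw [Set.ncard_univ, Nat.card_eq_fintype_card]
  have hLbdd : ∀ k ∈ {k | ∃ S : Set V, IsLinkedSet G (3 * r) k S}, k ≤ Fintype.card V := by
    intro k hk
    by_contra hc
    push_neg at hc
    obtain ⟨S, hS⟩ := hk
    obtain ⟨B, hBX, hBconn, -, -⟩ := hS Finset.univ (by simpa using hc)
    obtain ⟨⟨b, hb⟩⟩ := hBconn.nonempty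
    exact hBX b (Finset.mem_univ b) hb
  obtain ⟨S, hSwl, hScard⟩ := Nat.sSup_mem ⟨0, hWne⟩ hWbdd
  have hle : Nat.sqrt S.ncard / 2 ≤ linkNum G (3 * r) :=
    le_csSup ⟨Fintype.card V, hLbdd⟩ ⟨S, part2 S hSwl⟩
  have h1 : S.ncard < (Nat.sqrt S.ncard + 1) ^ 2 := Nat.lt_succ_sqrt' _
  have h3 : (Nat.sqrt S.ncard + 1) ^ 2 ≤ (2 * linkNum G (3 * r) + 2) ^ 2 :=
    Nat.pow_le_pow_left (by omega) 2
  have h4 : (2 * linkNum G (3 * r) + 2) ^ 2 = 4 * (1 + linkNum G (3 * r)) ^ 2 := by ring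
  have : wellNum G r = S.ncard := hScard.symm
  omega
end

section
/- For every finite graph G and integers r ≥ 0 and t ≥ 1, bn_r(G) ≤ t · bn_{3r+1, t}(G), where bn_{k,t}(G) is the maximum order of a depth-k t-bramble of G. -/
open SimpleGraph

variable {V : Type*}

section Auxiliary

variable {G : SimpleGraph V}

/-- The inclusion homomorphism between induced subgraphs. -/
private def inclHom (G : SimpleGraph V) {B C : Set V} (h : B ⊆ C) :
    G.induce B →g G.induce C where
  toFun := fun x => ⟨x.1, h x.2⟩
  map_rel' := fun hab => hab

private lemma connSet_nonempty {B : Set V} (h : ConnSet G B) : B.Nonempty :=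
  Set.nonempty_coe_sort.mp (SimpleGraph.Connected.nonempty h)

private lemma walkLE {B C : Set V} (hBC : B ⊆ C) (hc : ConnSet G B)
    {u v : V} (hu : u ∈ B) (hv : v ∈ B) {n : ℕ}
    (h : (G.induce B).dist ⟨u, hu⟩ ⟨v, hv⟩ ≤ n) :
    ∃ p : (G.induce C).Walk ⟨u, hBC hu⟩ ⟨v, hBC hv⟩, p.length ≤ n := by
  obtain ⟨p, hp⟩ :=
    (SimpleGraph.Connected.preconnected hc ⟨u, hu⟩ ⟨v, hv⟩).exists_walk_length_eq_dist
  refine ⟨p.map (inclHom G hBC), ?_⟩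
  exact (SimpleGraph.Walk.length_map _ p).trans_le (hp.trans_le h)

private lemma walk2r {B C : Set V} (hBC : B ⊆ C) (hc : ConnSet G B) {r : ℕ}
    (hr : RadiusLE G B r) {a v : V} (ha : a ∈ B) (hv : v ∈ B) :
    ∃ p : (G.induce C).Walk ⟨a, hBC ha⟩ ⟨v, hBC hv⟩, p.length ≤ 2 * r := by
  obtain ⟨u, hu⟩ := hr
  have h1 : (G.induce B).dist ⟨a, ha⟩ ⟨u.1, u.2⟩ ≤ r := by
    rw [SimpleGraph.dist_comm]
    exact hu ⟨a, ha⟩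
  have h2 : (G.induce B).dist ⟨u.1, u.2⟩ ⟨v, hv⟩ ≤ r := hu ⟨v, hv⟩
  obtain ⟨p1, hp1⟩ := walkLE hBC hc ha u.2 h1
  obtain ⟨p2, hp2⟩ := walkLE hBC hc u.2 hv h2
  refine ⟨p1.append p2, ?_⟩
  rw [SimpleGraph.Walk.length_append]
  omega

/-- The union of a nonempty pairwise-touching family of connected sets of radius
at most `r` is connected and has radius at most `3r+1`. -/
private lemma union_conn_rad {r : ℕ} {𝓑 : Finset (Set V)}
    (hmem : ∀ B ∈ 𝓑, ConnSet G B ∧ RadiusLE G B r)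
    (htouch : ∀ B ∈ 𝓑, ∀ B' ∈ 𝓑, Touch G B B')
    (hne : 𝓑.Nonempty) :
    ConnSet G {v | ∃ B ∈ 𝓑, v ∈ B} ∧ RadiusLE G {v | ∃ B ∈ 𝓑, v ∈ B} (3 * r + 1) := by
  set C : Set V := {v | ∃ B ∈ 𝓑, v ∈ B} with hCdef
  obtain ⟨B₀, hB₀⟩ := hne
  obtain ⟨hc₀, hr₀⟩ := hmem B₀ hB₀
  obtain ⟨u₀, hu₀⟩ := hr₀
  have hB₀C : B₀ ⊆ C := fun x hx => ⟨B₀, hB₀, hx⟩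
  have key : ∀ v (hv : v ∈ C), ∃ p : (G.induce C).Walk ⟨u₀.1, hB₀C u₀.2⟩ ⟨v, hv⟩,
      p.length ≤ 3 * r + 1 := by
    intro v hv
    obtain ⟨B, hB, hvB⟩ := hv
    have hBC : B ⊆ C := fun x hx => ⟨B, hB, hx⟩
    obtain ⟨hc, hr⟩ := hmem B hB
    rcases htouch B₀ hB₀ B hB with ⟨w, hw₀, hwB⟩ | ⟨a, ha, b, hb, hab⟩
    · obtain ⟨p1, hp1⟩ := walkLE hB₀C hc₀ u₀.2 hw₀ (hu₀ ⟨w, hw₀⟩)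
      obtain ⟨p2, hp2⟩ := walk2r hBC hc hr hwB hvB
      refine ⟨p1.append p2, ?_⟩
      rw [SimpleGraph.Walk.length_append]
      omega
    · obtain ⟨p1, hp1⟩ := walkLE hB₀C hc₀ u₀.2 ha (hu₀ ⟨a, ha⟩)
      obtain ⟨p2, hp2⟩ := walk2r hBC hc hr hb hvB
      have hadj : (G.induce C).Adj ⟨a, hB₀C ha⟩ ⟨b, hBC hb⟩ := hab
      refine ⟨p1.append (SimpleGraph.Walk.cons hadj p2), ?_⟩
      rw [SimpleGraph.Walk.length_append, SimpleGraph.Walk.length_cons]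
      omega
  constructor
  · show (G.induce C).Connected
    rw [SimpleGraph.connected_iff_exists_forall_reachable]
    refine ⟨⟨u₀.1, hB₀C u₀.2⟩, fun w => ?_⟩
    obtain ⟨p, _⟩ := key w.1 w.2
    exact SimpleGraph.Walk.reachable p
  · refine ⟨⟨u₀.1, hB₀C u₀.2⟩, fun v => ?_⟩
    obtain ⟨p, hp⟩ := key v.1 v.2
    exact le_trans (SimpleGraph.dist_le p) hp

private lemma radiusLE_mono {B : Set V} {m n : ℕ} (h : RadiusLE G B m) (hmn : m ≤ n) :
    RadiusLE G B n := by
  obtain ⟨u, hu⟩ := h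
  exact ⟨u, fun v => le_trans (hu v) hmn⟩

private lemma le_brambleOrder_of_hitting {𝓑 : Finset (Set V)} {X : Finset V}
    (h : IsHittingSet 𝓑 X) : brambleOrder 𝓑 ≤ X.card :=
  Nat.sInf_le ⟨X, rfl, h⟩

private lemma exists_min_hitting [Fintype V] (𝓑 : Finset (Set V))
    (h : ∀ B ∈ 𝓑, B.Nonempty) :
    ∃ X : Finset V, X.card = brambleOrder 𝓑 ∧ IsHittingSet 𝓑 X := by
  have hmem : IsHittingSet 𝓑 (Finset.univ : Finset V) := by
    intro B hB
    obtain ⟨x, hx⟩ := h B hB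
    exact ⟨x, Finset.mem_univ x, hx⟩
  have hne : {n | ∃ X : Finset V, X.card = n ∧ IsHittingSet 𝓑 X}.Nonempty :=
    ⟨(Finset.univ : Finset V).card, Finset.univ, rfl, hmem⟩
  obtain ⟨X, hX1, hX2⟩ := Nat.sInf_mem hne
  exact ⟨X, hX1, hX2⟩

private lemma brambleOrder_le_card [Fintype V] {𝓑 : Finset (Set V)}
    (h : ∀ B ∈ 𝓑, B.Nonempty) : brambleOrder 𝓑 ≤ Fintype.card V := by
  have hmem : IsHittingSet 𝓑 (Finset.univ : Finset V) := by
    intro B hB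
    obtain ⟨x, hx⟩ := h B hB
    exact ⟨x, Finset.mem_univ x, hx⟩
  exact Nat.sInf_le ⟨Finset.univ, Finset.card_univ, hmem⟩

private lemma brambleOrder_empty : brambleOrder (∅ : Finset (Set V)) = 0 := by
  have : (0 : ℕ) ∈ {n | ∃ X : Finset V, X.card = n ∧ IsHittingSet (∅ : Finset (Set V)) X} :=
    ⟨∅, Finset.card_empty, fun B hB => absurd hB (Finset.notMem_empty B)⟩
  exact Nat.le_zero.mp (Nat.sInf_le this)

end Auxiliary

/-- `bn_r(G) ≤ t · bn_{3r+1,t}(G)`. -/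
theorem bn_le_mul_bnT {V : Type*} [Fintype V] (G : SimpleGraph V) (r t : ℕ) (ht : 1 ≤ t) :
    bn G r ≤ t * bnT G (3 * r + 1) t := by
  classical
  -- The set defining `bnT` is bounded above by `Fintype.card V`.
  have bddT : BddAbove {n | ∃ 𝓒 : Finset (Set V),
      IsTBramble G (3 * r + 1) t 𝓒 ∧ brambleOrder 𝓒 = n} := by
    refine ⟨Fintype.card V, ?_⟩
    rintro n ⟨𝓒, h𝓒, rfl⟩
    exact brambleOrder_le_card fun B hB => connSet_nonempty (h𝓒.1.1 B hB).1
  -- It suffices to bound the order of an arbitrary depth-`r` bramble.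
  have hbnne : {n | ∃ 𝓑 : Finset (Set V), IsBramble G r 𝓑 ∧ brambleOrder 𝓑 = n}.Nonempty := by
    refine ⟨0, ∅, ⟨?_, ?_⟩, brambleOrder_empty⟩
    · intro B hB; exact absurd hB (Finset.notMem_empty B)
    · intro B hB; exact absurd hB (Finset.notMem_empty B)
  refine csSup_le hbnne ?_
  rintro k ⟨𝓑, h𝓑, rfl⟩
  set k := brambleOrder 𝓑 with hk
  rcases Nat.eq_zero_or_pos k with hk0 | hkpos
  · rw [hk0]; exact Nat.zero_le _
  -- the case `t = 1` : `𝓑` itself is a depth-`(3r+1)` `1`-bramble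
  rcases eq_or_lt_of_le ht with ht1 | ht2
  · have hTB : IsTBramble G (3 * r + 1) t 𝓑 := by
      refine ⟨⟨fun B hB => ⟨(h𝓑.1 B hB).1, radiusLE_mono (h𝓑.1 B hB).2 (by omega)⟩,
        h𝓑.2⟩, ?_⟩
      intro f hf
      obtain ⟨x, hx⟩ := connSet_nonempty (h𝓑.1 (f ⟨0, by omega⟩) (hf ⟨0, by omega⟩)).1
      refine ⟨x, Set.mem_iInter.mpr fun i => ?_⟩
      have hi : i = ⟨0, by omega⟩ := by
        ext
        omega
      rw [hi]
      exact hx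
    have hle : k ≤ bnT G (3 * r + 1) t := le_csSup bddT ⟨𝓑, hTB, rfl⟩
    calc k ≤ bnT G (3 * r + 1) t := hle
    _ ≤ t * bnT G (3 * r + 1) t := Nat.le_mul_of_pos_left _ (by omega)
  -- now `2 ≤ t`; pick a minimum hitting set `S` of `𝓑`
  have hSne : ∀ B ∈ 𝓑, B.Nonempty := fun B hB => connSet_nonempty (h𝓑.1 B hB).1
  obtain ⟨S, hScard, hShit⟩ := exists_min_hitting 𝓑 hSne
  set s : ℕ := (k - 1) / t with hs
  have hts' : t * s ≤ k - 1 := by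
    rw [hs, mul_comm]
    exact Nat.div_mul_le_self (k - 1) t
  have hdiv : k - 1 < (s + 1) * t := by
    have h1 : (k - 1) / t < s + 1 := by
      rw [← hs]
      exact Nat.lt_succ_self s
    exact (Nat.div_lt_iff_lt_mul (show 0 < t by omega)).mp h1
  have hkt : k ≤ t * (s + 1) := by
    calc k = k - 1 + 1 := by omega
    _ ≤ (s + 1) * t := Nat.succ_le_of_lt hdiv
    _ = t * (s + 1) := mul_comm _ _
  have h2s : 2 * s + 1 ≤ k := by
    have hst : s ≤ (k - 1) / 2 := by
      rw [hs]
      exact Nat.div_le_div_left ht2 (by omega)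
    have h2 : (k - 1) / 2 * 2 ≤ k - 1 := Nat.div_mul_le_self (k - 1) 2
    omega
  -- the construction: all connected sets of radius ≤ 3r+1 containing ≥ k - s points of S
  set P : Set V → Prop := fun C =>
    ConnSet G C ∧ RadiusLE G C (3 * r + 1) ∧ k ≤ (S.filter (· ∈ C)).card + s with hP
  set 𝓒 : Finset (Set V) := Finset.univ.filter P with h𝓒def
  have mem𝓒 : ∀ C : Set V, C ∈ 𝓒 ↔ P C := by
    intro C
    simp [h𝓒def, Finset.mem_filter]
  -- 𝓒 is a depth-(3r+1) t-bramble
  have hTB : IsTBramble G (3 * r + 1) t 𝓒 := by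
    refine ⟨⟨fun C hC => ⟨((mem𝓒 C).mp hC).1, ((mem𝓒 C).mp hC).2.1⟩, ?_⟩, ?_⟩
    · -- touching
      intro C hC C' hC'
      obtain ⟨-, -, hCcard⟩ := (mem𝓒 C).mp hC
      obtain ⟨-, -, hCcard'⟩ := (mem𝓒 C').mp hC'
      have hsub : (S.filter (· ∈ C)) ∪ (S.filter (· ∈ C')) ⊆ S :=
        Finset.union_subset (Finset.filter_subset _ _) (Finset.filter_subset _ _)
      have hcardU : ((S.filter (· ∈ C)) ∪ (S.filter (· ∈ C'))).card ≤ k := by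
        have h1 : ((S.filter (· ∈ C)) ∪ (S.filter (· ∈ C'))).card ≤ S.card :=
          Finset.card_le_card hsub
        omega
      have hie := Finset.card_union_add_card_inter (S.filter (· ∈ C)) (S.filter (· ∈ C'))
      have hpos : 0 < ((S.filter (· ∈ C)) ∩ (S.filter (· ∈ C'))).card := by omega
      obtain ⟨x, hx⟩ := Finset.card_pos.mp hpos
      rw [Finset.mem_inter, Finset.mem_filter, Finset.mem_filter] at hx
      exact Or.inl ⟨x, hx.1.2, hx.2.2⟩
    · -- t-wise intersection
      intro f hf
      have hbadi : ∀ i : Fin t, (S.filter (fun x => x ∉ f i)).card ≤ s := by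
        intro i
        obtain ⟨-, -, hcard⟩ := (mem𝓒 (f i)).mp (hf i)
        have hsplit_i : (S.filter (fun x => x ∈ f i)).card
            + (S.filter (fun x => x ∉ f i)).card = S.card :=
          Finset.card_filter_add_card_filter_not (fun x => x ∈ f i)
        omega
      have hbadsub : S.filter (fun x => ¬ ∀ i, x ∈ f i) ⊆
          Finset.univ.biUnion (fun i : Fin t => S.filter (fun x => x ∉ f i)) := by
        intro x hx
        rw [Finset.mem_filter] at hx
        obtain ⟨hxS, hxn⟩ := hx
        push_neg at hxn
        obtain ⟨i, hi⟩ := hxn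
        exact Finset.mem_biUnion.mpr ⟨i, Finset.mem_univ i, Finset.mem_filter.mpr ⟨hxS, hi⟩⟩
      have hbadcard : (S.filter (fun x => ¬ ∀ i, x ∈ f i)).card ≤ t * s := by
        calc (S.filter (fun x => ¬ ∀ i, x ∈ f i)).card
            ≤ (Finset.univ.biUnion (fun i : Fin t => S.filter (fun x => x ∉ f i))).card :=
              Finset.card_le_card hbadsub
          _ ≤ ∑ i : Fin t, (S.filter (fun x => x ∉ f i)).card := Finset.card_biUnion_le
          _ ≤ ∑ _i : Fin t, s := Finset.sum_le_sum fun i _ => hbadi i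
          _ = t * s := by
              simp [Finset.sum_const, Finset.card_univ, Fintype.card_fin, smul_eq_mul]
      have hbad' : (S.filter (fun x => ¬ ∀ i, x ∈ f i)).card ≤ k - 1 :=
        le_trans hbadcard hts'
      have hsplit : (S.filter (fun x => ∀ i, x ∈ f i)).card
          + (S.filter (fun x => ¬ ∀ i, x ∈ f i)).card = S.card :=
        Finset.card_filter_add_card_filter_not (fun x => ∀ i, x ∈ f i)
      have hgood : 0 < (S.filter (fun x => ∀ i, x ∈ f i)).card := by omega
      obtain ⟨x, hx⟩ := Finset.card_pos.mp hgood
      rw [Finset.mem_filter] at hx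
      exact ⟨x, Set.mem_iInter.mpr hx.2⟩
  -- every hitting set of 𝓒 has at least s + 1 elements
  have horder : ∀ X : Finset V, IsHittingSet 𝓒 X → s + 1 ≤ X.card := by
    intro X hX
    by_contra hcon
    push_neg at hcon
    have hXs : X.card ≤ s := by omega
    set 𝓑' : Finset (Set V) := 𝓑.filter (fun B => ∀ x ∈ X, x ∉ B) with h𝓑'
    have h𝓑'ne : 𝓑'.Nonempty := by
      by_contra hemp
      rw [Finset.not_nonempty_iff_eq_empty] at hemp
      have hhit : IsHittingSet 𝓑 X := by
        intro B hB
        by_contra hnB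
        push_neg at hnB
        have hmem : B ∈ 𝓑' := Finset.mem_filter.mpr ⟨hB, fun x hx => hnB x hx⟩
        rw [hemp] at hmem
        exact absurd hmem (Finset.notMem_empty B)
      have := le_brambleOrder_of_hitting hhit
      omega
    set C : Set V := {v | ∃ B ∈ 𝓑', v ∈ B} with hCdef
    have hmem' : ∀ B ∈ 𝓑', ConnSet G B ∧ RadiusLE G B r := fun B hB =>
      h𝓑.1 B (Finset.mem_of_mem_filter B hB)
    have htouch' : ∀ B ∈ 𝓑', ∀ B' ∈ 𝓑', Touch G B B' := fun B hB B' hB' =>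
      h𝓑.2 B (Finset.mem_of_mem_filter B hB) B' (Finset.mem_of_mem_filter B' hB')
    have hCconn : ConnSet G C := (union_conn_rad hmem' htouch' h𝓑'ne).1
    have hCrad : RadiusLE G C (3 * r + 1) := (union_conn_rad hmem' htouch' h𝓑'ne).2
    have hsubC : ∀ B ∈ 𝓑', B ⊆ C := fun B hB x hx => ⟨B, hB, hx⟩
    have hCmem : ∀ v ∈ C, ∃ B ∈ 𝓑', v ∈ B := fun v hv => hv
    clear hCdef
    clear_value C
    -- S ∩ C hits 𝓑'
    have hYhit : ∀ B ∈ 𝓑', ∃ x ∈ S.filter (· ∈ C), x ∈ B := by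
      intro B hB
      obtain ⟨x, hxS, hxB⟩ := hShit B (Finset.mem_of_mem_filter B hB)
      exact ⟨x, Finset.mem_filter.mpr ⟨hxS, hsubC B hB hxB⟩, hxB⟩
    -- X ∪ (S ∩ C) hits 𝓑
    have hXYhit : IsHittingSet 𝓑 (X ∪ S.filter (· ∈ C)) := by
      intro B hB
      by_cases hB' : B ∈ 𝓑'
      · obtain ⟨x, hx1, hx2⟩ := hYhit B hB'
        exact ⟨x, Finset.mem_union_right _ hx1, hx2⟩
      · have hnot : ¬ ∀ x ∈ X, x ∉ B := fun h => hB' (Finset.mem_filter.mpr ⟨hB, h⟩)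
        push_neg at hnot
        obtain ⟨x, hx1, hx2⟩ := hnot
        exact ⟨x, Finset.mem_union_left _ hx1, hx2⟩
    have hclow : k ≤ (S.filter (· ∈ C)).card + s := by
      have h1 := le_brambleOrder_of_hitting hXYhit
      have h2 : (X ∪ S.filter (· ∈ C)).card ≤ X.card + (S.filter (· ∈ C)).card :=
        Finset.card_union_le _ _
      omega
    have hC𝓒 : C ∈ 𝓒 := (mem𝓒 C).mpr ⟨hCconn, hCrad, hclow⟩
    obtain ⟨x, hxX, hxC⟩ := hX C hC𝓒
    obtain ⟨B, hB𝓑', hxB⟩ := hCmem x hxC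
    exact (Finset.mem_filter.mp hB𝓑').2 x hxX hxB
  -- conclude
  have h𝓒order : s + 1 ≤ brambleOrder 𝓒 := by
    obtain ⟨X, hX1, hX2⟩ := exists_min_hitting 𝓒
      (fun B hB => connSet_nonempty ((mem𝓒 B).mp hB).1)
    rw [← hX1]
    exact horder X hX2
  have hbnT : brambleOrder 𝓒 ≤ bnT G (3 * r + 1) t := le_csSup bddT ⟨𝓒, hTB, rfl⟩
  calc k ≤ t * (s + 1) := hkt
  _ ≤ t * brambleOrder 𝓒 := Nat.mul_le_mul_left t h𝓒order
  _ ≤ t * bnT G (3 * r + 1) t := Nat.mul_le_mul_left t hbnT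
end

section
/- Let G be a finite graph of girth greater than 8s + 4 for some integer s ≥ 1, and suppose G has at least one edge. Then bn_s(G) = 2: every depth-s bramble of G has order at most 2, and some depth-s bramble has order exactly 2. -/
open SimpleGraph

variable {V : Type*}

namespace BnAux

variable {V : Type*} {G : SimpleGraph V}

/-- Take the first `n` steps of a walk. -/
def takeW {u v : V} : (p : G.Walk u v) → (n : ℕ) → G.Walk u (p.getVert n)
  | Walk.nil, _ => Walk.nil
  | Walk.cons _ _, 0 => Walk.nil
  | Walk.cons h p, (n+1) => Walk.cons h (takeW p n)

lemma takeW_support {u v : V} (p : G.Walk u v) (n : ℕ) :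
    (takeW p n).support = p.support.take (n+1) := by
  induction p generalizing n with
  | nil => simp [takeW]
  | cons h p ih =>
    cases n with
    | zero => simp [takeW]; rfl
    | succ n => simp [takeW, ih]

lemma takeW_length {u v : V} (p : G.Walk u v) (n : ℕ) :
    (takeW p n).length = min n p.length := by
  induction p generalizing n with
  | nil => simp [takeW]
  | cons h p ih =>
    cases n with
    | zero => simp [takeW]; rfl
    | succ n => simp [takeW, ih]


lemma cycle_of_avoid [DecidableEq V] {x b c : V} (hxb : G.Adj x b) (hxc : G.Adj x c) (hbc : b ≠ c)
    (W : G.Walk b c) (hx : x ∉ W.support) :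
    ∃ (w : V) (cyc : G.Walk w w), cyc.IsCycle ∧ cyc.length ≤ W.length + 2 ∧
      ∀ z ∈ cyc.support, z = x ∨ z ∈ W.support := by
  have hPpath := W.bypass_isPath
  have hPsub := W.support_bypass_subset
  set P := W.bypass with hPdef
  have hxP : x ∉ P.support := fun h => hx (hPsub h)
  have hconc : (P.concat hxc.symm).IsPath := by
    rw [Walk.isPath_def, Walk.support_concat,
      List.nodup_append]
    refine ⟨hPpath.support_nodup, List.nodup_singleton x, ?_⟩
    intro z hz y hz' hzy
    rw [List.mem_singleton] at hz'
    subst hz'; subst hzy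
    exact hxP hz
  have hedge : s(x, b) ∉ (P.concat hxc.symm).edges := by
    rw [Walk.edges_concat]
    intro hmem
    rw [List.concat_eq_append, List.mem_append, List.mem_singleton] at hmem
    rcases hmem with hmem | hmem
    · exact hxP (Walk.fst_mem_support_of_mem_edges P hmem)
    · rw [Sym2.eq_iff] at hmem
      rcases hmem with ⟨h1, _⟩ | ⟨_, h2⟩
      · exact hxc.ne h1
      · exact hbc h2
  refine ⟨x, Walk.cons hxb (P.concat hxc.symm),
    (Walk.cons_isCycle_iff _ _).mpr ⟨hconc, hedge⟩, ?_, ?_⟩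
  · rw [Walk.length_cons, Walk.length_concat]
    have hlb : P.length ≤ W.length := W.length_bypass_le
    omega
  · intro z hz
    rw [Walk.support_cons, List.mem_cons] at hz
    rcases hz with rfl | hz
    · exact Or.inl rfl
    · rw [Walk.support_concat, List.mem_append] at hz
      rcases hz with hz | hz
      · exact Or.inr (hPsub hz)
      · rw [List.mem_singleton] at hz
        exact Or.inl hz

lemma cycle_of_two_paths [DecidableEq V] : ∀ {u v : V} (p q : G.Walk u v), p.IsPath → q.IsPath → p ≠ q →
    ∃ (w : V) (cyc : G.Walk w w), cyc.IsCycle ∧ cyc.length ≤ p.length + q.length ∧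
      ∀ z ∈ cyc.support, z ∈ p.support ∨ z ∈ q.support := by
  intro u v p
  induction p with
  | nil =>
    intro q _ hq hne
    rw [Walk.isPath_iff_eq_nil] at hq
    exact absurd hq.symm hne
  | @cons u a v h p' ih =>
    intro q hp hq hne
    cases q with
    | nil =>
      rw [Walk.cons_isPath_iff] at hp
      exact absurd p'.end_mem_support hp.2
    | @cons _ b _ h' q' =>
      rw [Walk.cons_isPath_iff] at hp hq
      by_cases hab : a = b
      · subst hab
        have hne' : p' ≠ q' := by
          intro hh; subst hh; exact hne rfl
        obtain ⟨w, cyc, hc, hlen, hsup⟩ := ih q' hp.1 hq.1 hne'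
        refine ⟨w, cyc, hc, ?_, ?_⟩
        · rw [Walk.length_cons, Walk.length_cons]; omega
        · intro z hz
          rcases hsup z hz with hz' | hz'
          · exact Or.inl (by rw [Walk.support_cons]; exact List.mem_cons_of_mem _ hz')
          · exact Or.inr (by rw [Walk.support_cons]; exact List.mem_cons_of_mem _ hz')
      · set W := p'.append q'.reverse with hW
        have hxW : u ∉ W.support := by
          rw [hW, Walk.mem_support_append_iff, Walk.support_reverse, List.mem_reverse]
          push_neg
          exact ⟨hp.2, hq.2⟩
        obtain ⟨w, cyc, hc, hlen, hsup⟩ := cycle_of_avoid h h' hab W hxW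
        refine ⟨w, cyc, hc, ?_, ?_⟩
        · rw [Walk.length_cons, Walk.length_cons]
          rw [hW, Walk.length_append, Walk.length_reverse] at hlen
          omega
        · intro z hz
          rcases hsup z hz with rfl | hz'
          · exact Or.inl (Walk.start_mem_support _)
          · rw [hW, Walk.mem_support_append_iff, Walk.support_reverse, List.mem_reverse] at hz'
            rcases hz' with hz' | hz'
            · exact Or.inl (by rw [Walk.support_cons]; exact List.mem_cons_of_mem _ hz')
            · exact Or.inr (by rw [Walk.support_cons]; exact List.mem_cons_of_mem _ hz')
lemma girth_lt_length {s : ℕ} (hg : 8 * s + 4 < G.girth) {w : V} (c : G.Walk w w)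
    (hc : c.IsCycle) : 8 * s + 4 < c.length := by
  have h1 : G.egirth ≤ (c.length : ℕ∞) :=
    iInf_le_of_le w (iInf_le_of_le c (iInf_le_of_le hc le_rfl))
  have h2 : G.girth ≤ c.length := by
    have := ENat.toNat_le_toNat h1 (by simp)
    simpa [SimpleGraph.girth] using this
  omega

lemma no_cycle_in [DecidableEq V] {s : ℕ} (hg : 8 * s + 4 < G.girth) (U : Set V)
    (hdiam : ∀ a ∈ U, ∀ b ∈ U, ∃ w : G.Walk a b, (∀ z ∈ w.support, z ∈ U) ∧
      w.length ≤ 4 * s + 1) :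
    ∀ {v : V} (c : G.Walk v v), c.IsCycle → ¬ (∀ z ∈ c.support, z ∈ U) := by
  intro v c hc hsub
  have hL : 8 * s + 4 < c.length := girth_lt_length hg c hc
  set k : ℕ := 4 * s + 2 with hk
  set u : V := c.getVert k with hu
  set p₁ : G.Walk v u := takeW c k with hp₁def
  have hp₁len : p₁.length = k := by
    rw [hp₁def, takeW_length]; omega
  have hp₁supp : p₁.support = c.support.take (k+1) := takeW_support c k
  have hp₁sub : p₁.support ⊆ c.support := by
    rw [hp₁supp]; exact List.take_subset _ _
  have htl : c.support = v :: c.support.tail := c.support_eq_cons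
  have htl_len : c.support.tail.length = c.length := by
    rw [List.length_tail, c.length_support]; omega
  have hnd : c.support.tail.Nodup := hc.support_nodup
  have hne_tl : c.support.tail ≠ [] := by
    intro hnil; rw [hnil] at htl_len; simp at htl_len; omega
  have h5 : c.support.reverse = v :: c.reverse.support.tail := by
    rw [← Walk.support_reverse]; exact c.reverse.support_eq_cons
  have h6 : c.support = c.reverse.support.tail.reverse ++ [v] := by
    rw [← List.reverse_reverse c.support, h5]; simp
  have htne : c.reverse.support.tail.reverse ≠ [] := by
    intro hnil
    rw [hnil] at h6
    have := congrArg List.length h6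
    rw [c.length_support] at this
    simp only [List.nil_append, List.length_singleton] at this
    omega
  set xs := c.reverse.support.tail.reverse.tail with hxsdef
  have hxs : c.support.tail = xs ++ [v] := by
    rw [h6, List.tail_append_of_ne_nil htne]
  have hxs_len : xs.length = c.length - 1 := by
    have := congrArg List.length hxs
    rw [htl_len, List.length_append, List.length_singleton] at this
    omega
  have hvxs : v ∉ xs := by
    have h4 := hnd
    rw [hxs, List.nodup_append] at h4
    intro hv
    exact h4.2.2 v hv v (List.mem_singleton_self v) rfl
  have hmemtake : ∀ z ∈ c.support.tail.take k, z ∈ xs := by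
    rw [hxs, List.take_append_of_le_length (by omega : k ≤ xs.length)]
    exact fun z hz => List.take_subset _ _ hz
  have hp₁path : p₁.IsPath := by
    rw [Walk.isPath_def, hp₁supp, htl, List.take_succ_cons, List.nodup_cons]
    exact ⟨fun hv => hvxs (hmemtake v hv), hnd.sublist (List.take_sublist _ _)⟩
  have huU : u ∈ U := hsub u (hp₁sub p₁.end_mem_support)
  have hvU : v ∈ U := hsub v c.start_mem_support
  obtain ⟨W, hWsub, hWlen⟩ := hdiam v hvU u huU
  have hp₂path : W.bypass.IsPath := W.bypass_isPath
  have hp₂len : W.bypass.length ≤ 4 * s + 1 :=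
    le_trans W.length_bypass_le hWlen
  have hne : p₁ ≠ W.bypass := by
    intro hh
    rw [hh] at hp₁len
    omega
  obtain ⟨w, cyc, hcyc, hclen, _⟩ := cycle_of_two_paths p₁ W.bypass hp₁path hp₂path hne
  have := girth_lt_length hg cyc hcyc
  omega
lemma unique_path_in [DecidableEq V] {s : ℕ} (hg : 8 * s + 4 < G.girth) (U : Set V)
    (hdiam : ∀ a ∈ U, ∀ b ∈ U, ∃ w : G.Walk a b, (∀ z ∈ w.support, z ∈ U) ∧
      w.length ≤ 4 * s + 1) :
    ∀ {a b : V} (p q : G.Walk a b), p.IsPath → q.IsPath →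
      (∀ z ∈ p.support, z ∈ U) → (∀ z ∈ q.support, z ∈ U) → p = q := by
  intro a b p q hp hq hpU hqU
  by_contra hne
  obtain ⟨w, cyc, hcyc, _, hsup⟩ := cycle_of_two_paths p q hp hq hne
  exact no_cycle_in hg U hdiam cyc hcyc (fun z hz =>
    (hsup z hz).elim (fun h => hpU z h) (fun h => hqU z h))

/-- A set inducing a connected subgraph (in walk terms), inside `U`. -/
def GoodSet (G : SimpleGraph V) (U S : Set V) : Prop :=
  S ⊆ U ∧ ∀ a ∈ S, ∀ c ∈ S, ∃ w : G.Walk a c, ∀ z ∈ w.support, z ∈ S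

section helly

variable [DecidableEq V] {s : ℕ} {U : Set V}
variable (hg : 8 * s + 4 < G.girth)
variable (hdiam : ∀ a ∈ U, ∀ b ∈ U, ∃ w : G.Walk a b, (∀ z ∈ w.support, z ∈ U) ∧
      w.length ≤ 4 * s + 1)

include hg hdiam

lemma path_in_good {S : Set V} (hS : GoodSet G U S) {a c : V} (ha : a ∈ S) (hc : c ∈ S)
    (r : G.Walk a c) (hr : r.IsPath) (hrU : ∀ z ∈ r.support, z ∈ U) :
    ∀ z ∈ r.support, z ∈ S := by
  obtain ⟨w, hw⟩ := hS.2 a ha c hc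
  have hbp : w.bypass.IsPath := w.bypass_isPath
  have hbpS : ∀ z ∈ w.bypass.support, z ∈ S := fun z hz => hw z (w.support_bypass_subset hz)
  have := unique_path_in hg U hdiam r w.bypass hr hbp hrU (fun z hz => hS.1 (hbpS z hz))
  rw [this]
  exact hbpS

end helly

lemma exists_first_meet {S : Set V} : ∀ {a b : V} (p : G.Walk a b), p.IsPath → b ∈ S →
    ∃ (m : V), m ∈ S ∧ ∃ (p₁ : G.Walk a m), p₁.IsPath ∧
      (∀ z ∈ p₁.support, z ∈ p.support) ∧ (∀ z ∈ p₁.support, z ∈ S → z = m) := by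
  intro a b p
  induction p with
  | nil =>
    intro _ hb
    exact ⟨_, hb, Walk.nil, Walk.IsPath.nil, by simp, by simp⟩
  | @cons u x v h p' ih =>
    intro hp hb
    by_cases ha : u ∈ S
    · exact ⟨u, ha, Walk.nil, Walk.IsPath.nil, by simp, by simp⟩
    · rw [Walk.cons_isPath_iff] at hp
      obtain ⟨m, hm, p₁', hp₁'path, hp₁'sub, hfirst⟩ := ih hp.1 hb
      refine ⟨m, hm, Walk.cons h p₁', hp₁'path.cons (fun hmem => hp.2 (hp₁'sub _ hmem)), ?_, ?_⟩
      · intro z hz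
        rw [Walk.support_cons, List.mem_cons] at hz
        rcases hz with rfl | hz
        · exact Walk.start_mem_support _
        · rw [Walk.support_cons]
          exact List.mem_cons_of_mem _ (hp₁'sub _ hz)
      · intro z hz hzS
        rw [Walk.support_cons, List.mem_cons] at hz
        rcases hz with rfl | hz
        · exact absurd hzS ha
        · exact hfirst z hz hzS
section helly2

variable [DecidableEq V] {s : ℕ} {U : Set V}
variable (hg : 8 * s + 4 < G.girth)
variable (hdiam : ∀ a ∈ U, ∀ b ∈ U, ∃ w : G.Walk a b, (∀ z ∈ w.support, z ∈ U) ∧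
      w.length ≤ 4 * s + 1)

include hg hdiam

lemma helly3 {A B C : Set V} (hA : GoodSet G U A) (hB : GoodSet G U B) (hC : GoodSet G U C)
    (hab : (A ∩ B).Nonempty) (hbc : (B ∩ C).Nonempty) (hac : (A ∩ C).Nonempty) :
    (A ∩ B ∩ C).Nonempty := by
  obtain ⟨a, haA, haB⟩ := hab
  obtain ⟨b, hbB, hbC⟩ := hbc
  obtain ⟨c, hcA, hcC⟩ := hac
  obtain ⟨wp, hwp⟩ := hB.2 a haB b hbB
  obtain ⟨wq, hwq⟩ := hC.2 b hbC c hcC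
  set p := wp.bypass with hpdef
  set q := wq.bypass with hqdef
  have hppath : p.IsPath := wp.bypass_isPath
  have hqpath : q.IsPath := wq.bypass_isPath
  have hpB : ∀ z ∈ p.support, z ∈ B := fun z hz => hwp z (wp.support_bypass_subset hz)
  have hqC : ∀ z ∈ q.support, z ∈ C := fun z hz => hwq z (wq.support_bypass_subset hz)
  have hbq : b ∈ ({z | z ∈ q.support} : Set V) := q.start_mem_support
  obtain ⟨m, hmq, p₁, hp₁path, hp₁sub, hfirst⟩ := exists_first_meet p hppath hbq
  have hmq' : m ∈ q.support := hmq
  set q₂ := q.dropUntil m hmq' with hq₂def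
  have hq₂path : q₂.IsPath := hqpath.dropUntil hmq'
  have hq₂sub : q₂.support ⊆ q.support := q.support_dropUntil_subset hmq'
  set r := p₁.append q₂ with hrdef
  have hrpath : r.IsPath := by
    rw [Walk.isPath_def, Walk.support_append, List.nodup_append]
    refine ⟨hp₁path.support_nodup, hq₂path.support_nodup.sublist (List.tail_sublist _), ?_⟩
    intro z hz z' hz' hzz'
    subst hzz'
    have hzq : z ∈ q.support := hq₂sub (List.mem_of_mem_tail hz')
    have hzm : z = m := hfirst z hz hzq
    subst hzm
    have : q₂.support = z :: q₂.support.tail := q₂.support_eq_cons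
    have hnd := hq₂path.support_nodup
    rw [this, List.nodup_cons] at hnd
    exact hnd.1 hz'
  have hrU : ∀ z ∈ r.support, z ∈ U := by
    intro z hz
    rw [hrdef, Walk.mem_support_append_iff] at hz
    rcases hz with hz | hz
    · exact hB.1 (hpB z (hp₁sub z hz))
    · exact hC.1 (hqC z (hq₂sub hz))
  have hrA : ∀ z ∈ r.support, z ∈ A := path_in_good hg hdiam hA haA hcA r hrpath hrU
  have hmr : m ∈ r.support := by
    rw [hrdef, Walk.mem_support_append_iff]
    exact Or.inl p₁.end_mem_support
  exact ⟨m, ⟨⟨hrA m hmr, hpB m (hp₁sub m p₁.end_mem_support)⟩, hqC m hmq'⟩⟩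

end helly2
section helly4

variable [DecidableEq V] [DecidableEq (Set V)] {s : ℕ} {U : Set V}
variable (hg : 8 * s + 4 < G.girth)
variable (hdiam : ∀ a ∈ U, ∀ b ∈ U, ∃ w : G.Walk a b, (∀ z ∈ w.support, z ∈ U) ∧
      w.length ≤ 4 * s + 1)

include hg hdiam

lemma goodSet_inter {S T : Set V} (hS : GoodSet G U S) (hT : GoodSet G U T) :
    GoodSet G U (S ∩ T) := by
  refine ⟨fun z hz => hS.1 hz.1, ?_⟩
  intro a ha c hc
  obtain ⟨w, hw⟩ := hS.2 a ha.1 c hc.1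
  have hbp : w.bypass.IsPath := w.bypass_isPath
  have hbpS : ∀ z ∈ w.bypass.support, z ∈ S := fun z hz => hw z (w.support_bypass_subset hz)
  have hbpT : ∀ z ∈ w.bypass.support, z ∈ T :=
    path_in_good hg hdiam hT ha.2 hc.2 w.bypass hbp (fun z hz => hS.1 (hbpS z hz))
  exact ⟨w.bypass, fun z hz => ⟨hbpS z hz, hbpT z hz⟩⟩

lemma hellyN : ∀ (n : ℕ) (𝓕 : Finset (Set V)), 𝓕.card ≤ n → 𝓕.Nonempty →
    (∀ S ∈ 𝓕, GoodSet G U S) → (∀ S ∈ 𝓕, ∀ T ∈ 𝓕, (S ∩ T).Nonempty) →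
    ∃ x, ∀ S ∈ 𝓕, x ∈ S := by
  intro n
  induction n with
  | zero =>
    intro 𝓕 hcard hne _ _
    obtain ⟨S, hS⟩ := hne
    exact absurd (Finset.card_pos.mpr ⟨S, hS⟩) (by omega)
  | succ n ih =>
    intro 𝓕 hcard hne hgood hpair
    by_cases h1 : 𝓕.card ≤ 1
    · obtain ⟨S, hS⟩ := hne
      have hcard1 : 𝓕.card = 1 := le_antisymm h1 (Finset.card_pos.mpr ⟨S, hS⟩)
      obtain ⟨T, hT⟩ := Finset.card_eq_one.mp hcard1
      obtain ⟨x, hx⟩ := hpair S hS S hS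
      refine ⟨x, fun R hR => ?_⟩
      rw [hT, Finset.mem_singleton] at hR hS
      rw [hR, ← hS]
      exact hx.1
    · obtain ⟨S, hS, T, hT, hST⟩ := Finset.one_lt_card.mp (show 1 < 𝓕.card by omega)
      set 𝓕' : Finset (Set V) := insert (S ∩ T) ((𝓕.erase S).erase T) with h𝓕'
      have hTe : T ∈ 𝓕.erase S := Finset.mem_erase.mpr ⟨fun h => hST h.symm, hT⟩
      have hc2 : 1 < 𝓕.card := by omega
      have hcard' : 𝓕'.card ≤ n := by
        rw [h𝓕']
        calc (insert (S ∩ T) ((𝓕.erase S).erase T)).card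
            ≤ ((𝓕.erase S).erase T).card + 1 := Finset.card_insert_le _ _
          _ = (𝓕.erase S).card - 1 + 1 := by rw [Finset.card_erase_of_mem hTe]
          _ = 𝓕.card - 1 - 1 + 1 := by rw [Finset.card_erase_of_mem hS]
          _ ≤ n := by omega
      have hmem𝓕 : ∀ R ∈ (𝓕.erase S).erase T, R ∈ 𝓕 := fun R hR =>
        Finset.mem_of_mem_erase (Finset.mem_of_mem_erase hR)
      have hgood' : ∀ R ∈ 𝓕', GoodSet G U R := by
        intro R hR
        rw [h𝓕'] at hR
        rcases Finset.mem_insert.mp hR with rfl | hR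
        · exact goodSet_inter hg hdiam (hgood S hS) (hgood T hT)
        · exact hgood R (hmem𝓕 R hR)
      have hpair' : ∀ R₁ ∈ 𝓕', ∀ R₂ ∈ 𝓕', (R₁ ∩ R₂).Nonempty := by
        intro R₁ hR₁ R₂ hR₂
        rw [h𝓕'] at hR₁ hR₂
        rcases Finset.mem_insert.mp hR₁ with rfl | hR₁ <;>
          rcases Finset.mem_insert.mp hR₂ with h2 | hR₂
        · rw [h2] at *; exact (hpair S hS T hT).mono (by intro z hz; exact ⟨hz, hz⟩)
        · exact helly3 hg hdiam (hgood S hS) (hgood T hT) (hgood R₂ (hmem𝓕 R₂ hR₂))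
            (hpair S hS T hT) (hpair T hT R₂ (hmem𝓕 R₂ hR₂)) (hpair S hS R₂ (hmem𝓕 R₂ hR₂))
        · rw [h2]
          have := helly3 hg hdiam (hgood S hS) (hgood T hT) (hgood R₁ (hmem𝓕 R₁ hR₁))
            (hpair S hS T hT) (hpair T hT R₁ (hmem𝓕 R₁ hR₁)) (hpair S hS R₁ (hmem𝓕 R₁ hR₁))
          obtain ⟨x, hx⟩ := this
          exact ⟨x, hx.2, hx.1⟩
        · exact hpair R₁ (hmem𝓕 R₁ hR₁) R₂ (hmem𝓕 R₂ hR₂)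
      obtain ⟨x, hx⟩ := ih 𝓕' hcard' (by rw [h𝓕']; exact Finset.insert_nonempty _ _) hgood' hpair'
      have hxST : x ∈ S ∩ T := hx (S ∩ T) (by rw [h𝓕']; exact Finset.mem_insert_self _ _)
      refine ⟨x, fun R hR => ?_⟩
      by_cases hRS : R = S
      · rw [hRS]; exact hxST.1
      · by_cases hRT : R = T
        · rw [hRT]; exact hxST.2
        · exact hx R (by rw [h𝓕']; exact Finset.mem_insert_of_mem (Finset.mem_erase.mpr ⟨hRT,
            Finset.mem_erase.mpr ⟨hRS, hR⟩⟩))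

end helly4
lemma walk_of_conn {B : Set V} (hconn : (G.induce B).Connected) {s : ℕ}
    (hrad : ∃ u : B, ∀ v : B, (G.induce B).dist u v ≤ s) {a c : V} (ha : a ∈ B) (hc : c ∈ B) :
    ∃ w : G.Walk a c, (∀ z ∈ w.support, z ∈ B) ∧ w.length ≤ 2 * s := by
  obtain ⟨u, hu⟩ := hrad
  have h1 : (G.induce B).dist ⟨a, ha⟩ ⟨c, hc⟩ ≤ 2 * s := by
    have ht := hconn.dist_triangle (u := (⟨a, ha⟩ : B)) (v := u) (w := (⟨c, hc⟩ : B))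
    have h2 := hu ⟨a, ha⟩
    have h3 := hu ⟨c, hc⟩
    rw [SimpleGraph.dist_comm] at h2
    omega
  obtain ⟨p, hp⟩ := hconn.exists_walk_length_eq_dist ⟨a, ha⟩ ⟨c, hc⟩
  refine ⟨p.map (SimpleGraph.Embedding.induce B).toHom, ?_, ?_⟩
  · intro z hz
    change z ∈ (p.map (SimpleGraph.Embedding.induce B).toHom).support at hz
    rw [Walk.support_map] at hz
    obtain ⟨t, ht, rfl⟩ := List.mem_map.mp hz
    exact t.2
  · change (p.map (SimpleGraph.Embedding.induce B).toHom).length ≤ 2 * s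
    rw [Walk.length_map, hp]
    omega
end BnAux


/-- a graph with an edge and girth greater than `8s+4` has `bn_s(G) = 2`:
every depth-`s` bramble has order at most `2`, some depth-`s` bramble has order exactly `2`. -/
theorem bn_eq_two_of_large_girth {V : Type*} [Fintype V] (G : SimpleGraph V) (s : ℕ)
    (hs : 1 ≤ s) (hgirth : ((8 * s + 4 : ℕ) : ℕ∞) < G.girth) (hedge : ∃ a b : V, G.Adj a b) :
    (∀ 𝓑 : Finset (Set V), IsBramble G s 𝓑 → brambleOrder 𝓑 ≤ 2) ∧
    (∃ 𝓑 : Finset (Set V), IsBramble G s 𝓑 ∧ brambleOrder 𝓑 = 2) ∧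
    bn G s = 2 := by
  classical
  obtain ⟨a0, b0, hab⟩ := hedge
  have hg : 8 * s + 4 < G.girth := by exact_mod_cast hgirth
  -- PART 1 : every depth-s bramble has order at most 2
  have part1 : ∀ 𝓑 : Finset (Set V), IsBramble G s 𝓑 → brambleOrder 𝓑 ≤ 2 := by
    intro 𝓑 hbr
    rcases Finset.eq_empty_or_nonempty 𝓑 with rfl | hne
    · have h0 : (0 : ℕ) ∈ {n | ∃ X : Finset V, X.card = n ∧ IsHittingSet (∅ : Finset (Set V)) X} :=
        ⟨∅, rfl, fun B hB => absurd hB (Finset.notMem_empty B)⟩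
      exact le_trans (Nat.sInf_le h0) (by omega)
    · set U : Set V := {v | ∃ B ∈ 𝓑, v ∈ B} with hU
      have hBU : ∀ B ∈ 𝓑, B ⊆ U := fun B hB v hv => ⟨B, hB, hv⟩
      have hwalkB : ∀ B ∈ 𝓑, ∀ a ∈ B, ∀ c ∈ B, ∃ w : G.Walk a c,
          (∀ z ∈ w.support, z ∈ B) ∧ w.length ≤ 2 * s := by
        intro B hB a ha c hc
        obtain ⟨hconn, hrad⟩ := hbr.1 B hB
        exact BnAux.walk_of_conn hconn hrad ha hc
      have hdiam : ∀ a ∈ U, ∀ b ∈ U, ∃ w : G.Walk a b, (∀ z ∈ w.support, z ∈ U) ∧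
          w.length ≤ 4 * s + 1 := by
        intro a ha b hb
        obtain ⟨B, hB, haB⟩ := ha
        obtain ⟨C, hC, hbC⟩ := hb
        rcases hbr.2 B hB C hC with ⟨t, htB, htC⟩ | ⟨x, hxB, y, hyC, hxy⟩
        · obtain ⟨w1, hw1, hl1⟩ := hwalkB B hB a haB t htB
          obtain ⟨w2, hw2, hl2⟩ := hwalkB C hC t htC b hbC
          refine ⟨w1.append w2, ?_, ?_⟩
          · intro z hz
            rw [SimpleGraph.Walk.mem_support_append_iff] at hz
            rcases hz with hz | hz
            exacts [hBU B hB (hw1 z hz), hBU C hC (hw2 z hz)]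
          · rw [SimpleGraph.Walk.length_append]; omega
        · obtain ⟨w1, hw1, hl1⟩ := hwalkB B hB a haB x hxB
          obtain ⟨w2, hw2, hl2⟩ := hwalkB C hC y hyC b hbC
          refine ⟨w1.append (SimpleGraph.Walk.cons hxy w2), ?_, ?_⟩
          · intro z hz
            rw [SimpleGraph.Walk.mem_support_append_iff] at hz
            rcases hz with hz | hz
            · exact hBU B hB (hw1 z hz)
            · rw [SimpleGraph.Walk.support_cons, List.mem_cons] at hz
              rcases hz with rfl | hz
              exacts [hBU B hB hxB, hBU C hC (hw2 z hz)]
          · rw [SimpleGraph.Walk.length_append, SimpleGraph.Walk.length_cons]; omega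
      set Bp : Set V → Set V := fun B => B ∪ {y | y ∈ U ∧ ∃ b ∈ B, G.Adj y b} with hBp
      have hBpsub : ∀ B ∈ 𝓑, Bp B ⊆ U := by
        intro B hB z hz
        simp only [hBp] at hz
        rcases hz with hz | hz
        exacts [hBU B hB hz, hz.1]
      have hgoodBp : ∀ B ∈ 𝓑, BnAux.GoodSet G U (Bp B) := by
        intro B hB
        refine ⟨hBpsub B hB, ?_⟩
        have key : ∀ y ∈ Bp B, ∃ y' ∈ B, ∃ wy : G.Walk y y', ∀ z ∈ wy.support, z ∈ Bp B := by
          intro y hy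
          have hy' := hy
          simp only [hBp] at hy'
          rcases hy' with hyB | ⟨hyU, b, hbB, hyb⟩
          · exact ⟨y, hyB, SimpleGraph.Walk.nil, by
              intro z hz; rw [SimpleGraph.Walk.support_nil, List.mem_singleton] at hz
              subst hz; exact hy⟩
          · refine ⟨b, hbB, SimpleGraph.Walk.cons hyb SimpleGraph.Walk.nil, ?_⟩
            intro z hz
            rw [SimpleGraph.Walk.support_cons, List.mem_cons] at hz
            rcases hz with rfl | hz
            · exact hy
            · rw [SimpleGraph.Walk.support_nil, List.mem_singleton] at hz
              subst hz
              simp only [hBp]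
              exact Or.inl hbB
        intro p hp q hq
        obtain ⟨p', hp', wp, hwp⟩ := key p hp
        obtain ⟨q', hq', wq, hwq⟩ := key q hq
        obtain ⟨wm, hwm, _⟩ := hwalkB B hB p' hp' q' hq'
        refine ⟨wp.append (wm.append wq.reverse), ?_⟩
        intro z hz
        rw [SimpleGraph.Walk.mem_support_append_iff] at hz
        rcases hz with hz | hz
        · exact hwp z hz
        · rw [SimpleGraph.Walk.mem_support_append_iff] at hz
          rcases hz with hz | hz
          · simp only [hBp]; exact Or.inl (hwm z hz)
          · rw [SimpleGraph.Walk.support_reverse, List.mem_reverse] at hz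
            exact hwq z hz
      -- apply Helly
      have hpairBp : ∀ B₁ ∈ 𝓑, ∀ B₂ ∈ 𝓑, (Bp B₁ ∩ Bp B₂).Nonempty := by
        intro B₁ hB₁ B₂ hB₂
        rcases hbr.2 B₁ hB₁ B₂ hB₂ with ⟨t, h1, h2⟩ | ⟨x, hx, y, hy, hxy⟩
        · refine ⟨t, ?_, ?_⟩ <;> simp only [hBp]
          exacts [Or.inl h1, Or.inl h2]
        · refine ⟨y, ?_, ?_⟩ <;> simp only [hBp]
          · exact Or.inr ⟨hBU B₂ hB₂ hy, x, hx, hxy.symm⟩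
          · exact Or.inl hy
      have hhelly := BnAux.hellyN hg hdiam (𝓑.image Bp).card (𝓑.image Bp) le_rfl
        (hne.image Bp) ?_ ?_
      rotate_left
      · intro S hS
        obtain ⟨B, hB, rfl⟩ := Finset.mem_image.mp hS
        exact hgoodBp B hB
      · intro S hS T hT
        obtain ⟨B₁, hB₁, rfl⟩ := Finset.mem_image.mp hS
        obtain ⟨B₂, hB₂, rfl⟩ := Finset.mem_image.mp hT
        exact hpairBp B₁ hB₁ B₂ hB₂
      obtain ⟨x, hx⟩ := hhelly
      have hxBp : ∀ B ∈ 𝓑, x ∈ Bp B := fun B hB => hx _ (Finset.mem_image_of_mem _ hB)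
      by_cases hall : ∀ B ∈ 𝓑, x ∈ B
      · have h1 : (1 : ℕ) ∈ {n | ∃ X : Finset V, X.card = n ∧ IsHittingSet 𝓑 X} :=
          ⟨{x}, Finset.card_singleton x, fun B hB => ⟨x, Finset.mem_singleton_self x, hall B hB⟩⟩
        exact le_trans (Nat.sInf_le h1) (by omega)
      · push_neg at hall
        obtain ⟨B₁, hB₁, hxB₁⟩ := hall
        have hx1 := hxBp B₁ hB₁
        simp only [hBp] at hx1
        rcases hx1 with hx1 | ⟨hxU, y₁, hy₁, hxy₁⟩
        · exact absurd hx1 hxB₁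
        have hhit : ∀ B ∈ 𝓑, x ∈ B ∨ y₁ ∈ B := by
          intro B hB
          by_cases hxB : x ∈ B
          · exact Or.inl hxB
          right
          have hx2 := hxBp B hB
          simp only [hBp] at hx2
          rcases hx2 with hx2 | ⟨_, y, hyB, hxy⟩
          · exact absurd hx2 hxB
          by_cases hyy : y = y₁
          · subst hyy; exact hyB
          exfalso
          have hwyy : ∃ w : G.Walk y y₁, ∀ z ∈ w.support, z ∈ B ∪ B₁ := by
            rcases hbr.2 B hB B₁ hB₁ with ⟨t, h1, h2⟩ | ⟨p, hp, q, hq, hpq⟩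
            · obtain ⟨w1, hw1, _⟩ := hwalkB B hB y hyB t h1
              obtain ⟨w2, hw2, _⟩ := hwalkB B₁ hB₁ t h2 y₁ hy₁
              refine ⟨w1.append w2, ?_⟩
              intro z hz
              rw [SimpleGraph.Walk.mem_support_append_iff] at hz
              rcases hz with hz | hz
              exacts [Or.inl (hw1 z hz), Or.inr (hw2 z hz)]
            · obtain ⟨w1, hw1, _⟩ := hwalkB B hB y hyB p hp
              obtain ⟨w2, hw2, _⟩ := hwalkB B₁ hB₁ q hq y₁ hy₁
              refine ⟨w1.append (SimpleGraph.Walk.cons hpq w2), ?_⟩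
              intro z hz
              rw [SimpleGraph.Walk.mem_support_append_iff] at hz
              rcases hz with hz | hz
              · exact Or.inl (hw1 z hz)
              · rw [SimpleGraph.Walk.support_cons, List.mem_cons] at hz
                rcases hz with rfl | hz
                exacts [Or.inl hp, Or.inr (hw2 z hz)]
          obtain ⟨w, hw⟩ := hwyy
          have hxw : x ∉ w.support := by
            intro hmem
            rcases hw x hmem with h | h
            exacts [hxB h, hxB₁ h]
          obtain ⟨w0, cyc, hcyc, _, hsup⟩ := BnAux.cycle_of_avoid hxy hxy₁ hyy w hxw
          refine BnAux.no_cycle_in hg U hdiam cyc hcyc ?_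
          intro z hz
          rcases hsup z hz with rfl | hz'
          · exact hxU
          · rcases hw z hz' with h | h
            exacts [hBU B hB h, hBU B₁ hB₁ h]
        have h2m : (2 : ℕ) ∈ {n | ∃ X : Finset V, X.card = n ∧ IsHittingSet 𝓑 X} := by
          refine ⟨{x, y₁}, ?_, ?_⟩
          · rw [Finset.card_insert_of_notMem (by simp [hxy₁.ne]), Finset.card_singleton]
          · intro B hB
            rcases hhit B hB with h | h
            · exact ⟨x, by simp, h⟩
            · exact ⟨y₁, by simp, h⟩
        exact Nat.sInf_le h2m
  -- PART 2 : a bramble of order exactly 2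
  have hane : a0 ≠ b0 := hab.ne
  set BB : Finset (Set V) := {({a0} : Set V), {b0}} with hBB
  have hmem : ∀ B ∈ BB, B = {a0} ∨ B = {b0} := by
    intro B hB
    rw [hBB, Finset.mem_insert, Finset.mem_singleton] at hB
    exact hB
  have hconn_s : ∀ v : V, ConnSet G {v} := by
    intro v
    have hnev : Nonempty ↥({v} : Set V) := ⟨⟨v, rfl⟩⟩
    refine ⟨fun u w => ?_⟩
    have : u = w := Subsingleton.elim u w
    rw [this]
  have hrad_s : ∀ v : V, RadiusLE G {v} s := by
    intro v
    refine ⟨⟨v, rfl⟩, fun w => ?_⟩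
    have : w = ⟨v, rfl⟩ := Subsingleton.elim _ _
    rw [this, SimpleGraph.dist_self]
    omega
  have hbr2 : IsBramble G s BB := by
    constructor
    · intro B hB
      rcases hmem B hB with rfl | rfl
      exacts [⟨hconn_s a0, hrad_s a0⟩, ⟨hconn_s b0, hrad_s b0⟩]
    · intro B hB C hC
      rcases hmem B hB with rfl | rfl <;> rcases hmem C hC with rfl | rfl
      · exact Or.inl ⟨a0, rfl, rfl⟩
      · exact Or.inr ⟨a0, rfl, b0, rfl, hab⟩
      · exact Or.inr ⟨b0, rfl, a0, rfl, hab.symm⟩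
      · exact Or.inl ⟨b0, rfl, rfl⟩
  have hmemA : ({a0} : Set V) ∈ BB := by rw [hBB]; exact Finset.mem_insert_self _ _
  have hmemB : ({b0} : Set V) ∈ BB := by rw [hBB]; simp
  have h2S : (2 : ℕ) ∈ {n | ∃ X : Finset V, X.card = n ∧ IsHittingSet BB X} := by
    refine ⟨{a0, b0}, ?_, ?_⟩
    · rw [Finset.card_insert_of_notMem (by simp [hane]), Finset.card_singleton]
    · intro B hB
      rcases hmem B hB with rfl | rfl
      · exact ⟨a0, by simp, rfl⟩
      · exact ⟨b0, by simp, rfl⟩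
  have horder : brambleOrder BB = 2 := by
    refine le_antisymm (Nat.sInf_le h2S) (le_csInf ⟨2, h2S⟩ ?_)
    rintro n ⟨X, rfl, hX⟩
    obtain ⟨xa, hxaX, hxa⟩ := hX {a0} hmemA
    obtain ⟨xb, hxbX, hxb⟩ := hX {b0} hmemB
    rw [Set.mem_singleton_iff] at hxa hxb
    subst hxa; subst hxb
    have hsub : ({xa, xb} : Finset V) ⊆ X := by
      intro z hz
      rw [Finset.mem_insert, Finset.mem_singleton] at hz
      rcases hz with rfl | rfl
      exacts [hxaX, hxbX]
    calc 2 = ({xa, xb} : Finset V).card := by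
            rw [Finset.card_insert_of_notMem (by simp [hane]), Finset.card_singleton]
      _ ≤ X.card := Finset.card_le_card hsub
  refine ⟨part1, ⟨BB, hbr2, horder⟩, ?_⟩
  -- PART 3 : bn = 2
  have h2T : (2 : ℕ) ∈ {n | ∃ 𝓑 : Finset (Set V), IsBramble G s 𝓑 ∧ brambleOrder 𝓑 = n} :=
    ⟨BB, hbr2, horder⟩
  have hub : ∀ n ∈ {n | ∃ 𝓑 : Finset (Set V), IsBramble G s 𝓑 ∧ brambleOrder 𝓑 = n}, n ≤ 2 := by
    rintro n ⟨𝓑, hb, rfl⟩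
    exact part1 𝓑 hb
  exact le_antisymm (csSup_le ⟨2, h2T⟩ hub) (le_csSup ⟨2, hub⟩ h2T)
end
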